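/- arXiv:0910.5429 — 4 statements merged into one kernel-verified Lean document; each statement's English description precedes it below -/
import Mathlib

section
/- The matrix-tree theorem: for a connected multigraph G with n vertices and signed incidence matrix E (with one vertex column removed), and for any set U of n-1 edges, the determinant of the square submatrix of E given by the rows indexed by U lies in {-1, 0, 1}, and it is nonzero if and only if U is the edge set of a spanning tree of G. -/
/-- A finite multigraph with oriented edges: each edge has a source and a target vertex.
Self-loops (src = tgt) and parallel edges are allowed. -/
structure Multigraph (E V : Type*) where
  src : E → V
  tgt : E → V

namespace Multigraph

variable {E V : Type*}

/-- Two vertices are adjacent via an edge of the subset `F`. -/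
def Adj (G : Multigraph E V) (F : Finset E) (a b : V) : Prop :=
  ∃ e ∈ F, (G.src e = a ∧ G.tgt e = b) ∨ (G.src e = b ∧ G.tgt e = a)

/-- Reachability (connectivity) using only edges in `F`. -/
def Reach (G : Multigraph E V) (F : Finset E) : V → V → Prop :=
  Relation.ReflTransGen (G.Adj F)

/-- `T` is (the edge set of) a spanning tree of `G`: it connects all vertices and has
`|V| - 1` edges. -/
def IsSpanningTree (G : Multigraph E V) [Fintype V] (T : Finset E) : Prop :=
  (∀ v w : V, G.Reach T v w) ∧ T.card + 1 = Fintype.card V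

/-- `G` is connected. -/
def Connected (G : Multigraph E V) [Fintype E] [Fintype V] : Prop :=
  ∀ v w : V, G.Reach Finset.univ v w

/-- The signed incidence matrix entry of edge `e` at vertex `v`:
`+1` if `e` begins at `v`, `-1` if `e` ends at `v`, `0` otherwise (in particular `0`
for self-loops). -/
def inc (G : Multigraph E V) (R : Type*) [Ring R] [DecidableEq V] (e : E) (v : V) : R :=
  (if G.src e = v then 1 else 0) - (if G.tgt e = v then 1 else 0)

open Classical in
/-- The Kirchhoff (graph) polynomial `Ψ_G = Σ_T Π_{e ∉ T} α_e`, sum over spanning trees. -/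
noncomputable def kirchhoff (G : Multigraph E V) [Fintype E] [DecidableEq E] [Fintype V] :
    MvPolynomial E ℚ :=
  ∑ T : Finset E, if G.IsSpanningTree T then ∏ e ∈ Tᶜ, MvPolynomial.X e else 0

/-- `F` is a spanning forest of `G` whose trees realize the partition `parts` of a subset of
the vertices: it has `|V| - |parts|` edges (forcing acyclicity), vertices in the same part
are connected, vertices in different parts are disconnected, and every vertex lies in the
tree of some part. -/
def IsSpanningForest (G : Multigraph E V) [Fintype V] (parts : Finset (Finset V))
    (F : Finset E) : Prop :=
  F.card + parts.card = Fintype.card V ∧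
  (∀ p ∈ parts, ∀ v ∈ p, ∀ w ∈ p, G.Reach F v w) ∧
  (∀ p ∈ parts, ∀ q ∈ parts, p ≠ q → ∀ v ∈ p, ∀ w ∈ q, ¬ G.Reach F v w) ∧
  (∀ v : V, ∃ p ∈ parts, ∃ w ∈ p, G.Reach F v w)

open Classical in
/-- The spanning forest polynomial `Φ^P_G = Σ_F Π_{e ∉ F} α_e`. -/
noncomputable def forestPoly (G : Multigraph E V) [Fintype E] [DecidableEq E] [Fintype V]
    (parts : Finset (Finset V)) : MvPolynomial E ℚ :=
  ∑ F : Finset E, if G.IsSpanningForest parts F then ∏ e ∈ Fᶜ, MvPolynomial.X e else 0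

end Multigraph

/-- `parts` is a set partition (of the union of its parts): parts are nonempty and
pairwise disjoint. -/
def IsSetPartition {V : Type*} (parts : Finset (Finset V)) : Prop :=
  ∅ ∉ parts ∧ ∀ p ∈ parts, ∀ q ∈ parts, p ≠ q → Disjoint p q

/-- `parts` is a set partition of the finite vertex set `W`. -/
def IsPartitionOf {V : Type*} (W : Finset V) (parts : Finset (Finset V)) : Prop :=
  IsSetPartition parts ∧ (∀ p ∈ parts, p ⊆ W) ∧ ∀ v ∈ W, ∃ p ∈ parts, v ∈ p
namespace Multigraph

variable {E V : Type*}

/-- The matrix `M_G(·,·)_K`: the reduced block matrix `[[A, 𝓔],[-𝓔ᵀ, 0]]` (one vertex `v0`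
removed) in which the variables of the edges in `K` have been set to `0`. -/
noncomputable def bigMatK (G : Multigraph E V) [DecidableEq E] [DecidableEq V] (v0 : V) (K : Finset E) :
    Matrix (E ⊕ {v : V // v ≠ v0}) (E ⊕ {v : V // v ≠ v0}) (MvPolynomial E ℚ) :=
  Matrix.fromBlocks (Matrix.diagonal fun e => if e ∈ K then 0 else MvPolynomial.X e)
    (Matrix.of fun e (v : {v : V // v ≠ v0}) => G.inc (MvPolynomial E ℚ) e ↑v)
    (Matrix.of fun (v : {v : V // v ≠ v0}) e => -G.inc (MvPolynomial E ℚ) e ↑v)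
    0

/-- The Dodgson polynomial `Ψ^{I,J}_{G,K}`: the determinant of `M_G` with the rows indexed
by `I` and the columns indexed by `J` deleted and the variables of `K` set to zero.  The
rows and columns are enumerated in increasing order, which fixes the sign. -/
noncomputable def dodgson (G : Multigraph E V) [Fintype E] [LinearOrder E] [Fintype V]
    [DecidableEq V] (v0 : V) (I J K : Finset E) : MvPolynomial E ℚ :=
  if h : I.card = J.card then
    Matrix.det (Matrix.of fun r c : Fin (Iᶜ.card) ⊕ {v : V // v ≠ v0} =>
      G.bigMatK v0 K
        (Sum.map (fun i => ((Iᶜ.orderIsoOfFin rfl) i : E)) id r)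
        (Sum.map (fun j => ((Jᶜ.orderIsoOfFin (by simp [Finset.card_compl, h])) j : E)) id c))
  else 0

/-- The determinant of the square submatrix of the reduced signed incidence matrix of `G`
(with the column of the vertex `v0` removed) given by the rows indexed by the edge set `S`
(rows and columns enumerated in increasing order); junk value `0` if `S` does not have
`|V| - 1` elements. -/
noncomputable def rowDet (G : Multigraph E V) [Fintype E] [LinearOrder E] [Fintype V]
    [LinearOrder V] (v0 : V) (S : Finset E) : ℚ :=
  if h : S.card = Fintype.card V - 1 then
    Matrix.det (Matrix.of fun i j : Fin (Fintype.card V - 1) =>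
      G.inc ℚ ((S.orderIsoOfFin h) i : E)
        (((Finset.univ.erase v0).orderIsoOfFin
          (by rw [Finset.card_erase_of_mem (Finset.mem_univ v0), Finset.card_univ])) j : V))
  else 0

/-- `𝓔_G(S)`: the determinant of the reduced incidence matrix with the rows `S` deleted
(and the column of `v0` deleted). -/
noncomputable def detE (G : Multigraph E V) [Fintype E] [LinearOrder E] [Fintype V]
    [LinearOrder V] (v0 : V) (S : Finset E) : ℚ :=
  G.rowDet v0 Sᶜ

end Multigraph

section MatrixTreeAux

private def optInd {n : ℕ} (s : Option (Fin n)) (j : Fin n) : ℚ := if s = some j then 1 else 0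

private lemma sum_optInd {n : ℕ} (s : Option (Fin n)) :
    ∑ j, optInd s j = Option.rec 0 (fun _ => 1) s := by
  cases s with
  | none => simp [optInd]
  | some a => simp [optInd]

private lemma optInd_del {n : ℕ} (a : Fin (n + 1)) (s : Option (Fin (n + 1))) :
    ∃ s' : Option (Fin n), ∀ j, optInd s (a.succAbove j) = optInd s' j := by
  cases s with
  | none => exact ⟨none, fun j => rfl⟩
  | some c =>
    by_cases h : ∃ k, a.succAbove k = c
    · obtain ⟨k, hk⟩ := h
      refine ⟨some k, fun j => ?_⟩
      simp [optInd, ← hk, Fin.succAbove_right_injective.eq_iff]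
    · refine ⟨none, fun j => ?_⟩
      have : c ≠ a.succAbove j := fun hc => h ⟨j, hc.symm⟩
      simp [optInd, this]

private lemma minor_hyp {n : ℕ} (M : Matrix (Fin (n + 1)) (Fin (n + 1)) ℚ)
    (hM : ∀ i, ∃ s t, ∀ j, M i j = optInd s j - optInd t j) (i a : Fin (n + 1)) :
    ∀ k, ∃ s t, ∀ j, (M.submatrix i.succAbove a.succAbove) k j = optInd s j - optInd t j := by
  intro k
  obtain ⟨s, t, h⟩ := hM (i.succAbove k)
  obtain ⟨s', hs⟩ := optInd_del a s
  obtain ⟨t', ht⟩ := optInd_del a t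
  exact ⟨s', t', fun j => by rw [Matrix.submatrix_apply, h, hs, ht]⟩

private lemma mem_sign_mul {a d : ℚ} (ha : a = 1 ∨ a = -1) (hd : d ∈ ({-1, 0, 1} : Set ℚ)) :
    a * d ∈ ({-1, 0, 1} : Set ℚ) := by
  simp only [Set.mem_insert_iff, Set.mem_singleton_iff] at *
  rcases ha with h | h <;> rcases hd with h' | h' | h' <;> simp [h, h']

private lemma tu_det : ∀ (n : ℕ) (M : Matrix (Fin n) (Fin n) ℚ),
    (∀ i, ∃ s t : Option (Fin n), ∀ j, M i j = optInd s j - optInd t j) →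
    M.det ∈ ({-1, 0, 1} : Set ℚ) := by
  intro n
  induction n with
  | zero => intro M _; rw [Matrix.det_fin_zero]; simp
  | succ n ih =>
    intro M hM
    by_cases hrow : ∀ i, ∑ j, M i j = 0
    · have hdet : M.det = 0 := by
        rw [← Matrix.exists_mulVec_eq_zero_iff]
        refine ⟨fun _ => 1, fun h => one_ne_zero (congrFun h 0), ?_⟩
        funext i
        simpa [Matrix.mulVec, dotProduct] using hrow i
      simp [hdet]
    · push_neg at hrow
      obtain ⟨i, hi⟩ := hrow
      obtain ⟨s, t, hst⟩ := hM i
      have hsum : ∑ j, M i j =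
          (Option.rec 0 (fun _ => 1) s : ℚ) - Option.rec 0 (fun _ => 1) t := by
        rw [← sum_optInd s, ← sum_optInd t, ← Finset.sum_sub_distrib]
        exact Finset.sum_congr rfl fun j _ => hst j
      cases s with
      | none =>
        cases t with
        | none => rw [hsum] at hi; simp at hi
        | some b =>
          have hdet : M.det =
              ((-1) ^ (↑i + ↑b : ℕ) * (-1)) * (M.submatrix i.succAbove b.succAbove).det := by
            rw [Matrix.det_succ_row M i, Finset.sum_eq_single b]
            · rw [hst b]; simp [optInd]
            · intro j _ hj
              rw [hst j]
              simp [optInd, (Ne.symm hj)]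
            · intro h; exact absurd (Finset.mem_univ b) h
          rw [hdet]
          refine mem_sign_mul ?_ (ih _ (minor_hyp M hM i b))
          rcases neg_one_pow_eq_or ℚ (↑i + ↑b) with h | h <;> rw [h] <;> simp
      | some a =>
        cases t with
        | some b => rw [hsum] at hi; simp at hi
        | none =>
          have hdet : M.det =
              (-1) ^ (↑i + ↑a : ℕ) * (M.submatrix i.succAbove a.succAbove).det := by
            rw [Matrix.det_succ_row M i, Finset.sum_eq_single a]
            · rw [hst a]; simp [optInd]
            · intro j _ hj
              rw [hst j]
              simp [optInd, (Ne.symm hj)]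
            · intro h; exact absurd (Finset.mem_univ a) h
          rw [hdet]
          exact mem_sign_mul (neg_one_pow_eq_or ℚ _) (ih _ (minor_hyp M hM i a))

end MatrixTreeAux

/-- **matrix-tree theorem.**  For a connected multigraph `G` with `n`
vertices and any set `U` of `n - 1` edges, the determinant of the square submatrix of the
reduced signed incidence matrix (one vertex column removed) given by the rows indexed by
`U` lies in `{-1, 0, 1}`, and it is nonzero iff `U` is (the edge set of) a spanning tree. -/
theorem matrix_tree {E V : Type*} [Fintype E] [LinearOrder E] [Fintype V] [LinearOrder V]
    (G : Multigraph E V) (hconn : G.Connected) (v0 : V) (U : Finset E)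
    (hU : U.card = Fintype.card V - 1) :
    G.rowDet v0 U ∈ ({-1, 0, 1} : Set ℚ) ∧
      (G.rowDet v0 U ≠ 0 ↔ G.IsSpanningTree U) := by
  classical
  have hV1 : 1 ≤ Fintype.card V := Fintype.card_pos_iff.mpr ⟨v0⟩
  have hcol : (Finset.univ.erase v0).card = Fintype.card V - 1 := by
    rw [Finset.card_erase_of_mem (Finset.mem_univ v0), Finset.card_univ]
  set m := Fintype.card V - 1 with hm
  let ρ := U.orderIsoOfFin hU
  let σ := (Finset.univ.erase v0).orderIsoOfFin hcol
  set M : Matrix (Fin m) (Fin m) ℚ :=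
    Matrix.of (fun i j => G.inc ℚ (ρ i) (σ j)) with hMdef
  have hrdet : G.rowDet v0 U = M.det := by
    rw [Multigraph.rowDet, dif_pos hU]
  -- key sum computation
  have key : ∀ g : V → ℚ, g v0 = 0 → ∀ e : E,
      (∑ j, G.inc ℚ e (σ j) * g (σ j)) = g (G.src e) - g (G.tgt e) := by
    intro g hg e
    have h1 : ∑ j, G.inc ℚ e (σ j) * g (σ j)
        = ∑ v ∈ Finset.univ.erase v0, G.inc ℚ e v * g v := by
      rw [← Finset.sum_coe_sort (Finset.univ.erase v0) (fun v => G.inc ℚ e v * g v)]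
      exact Fintype.sum_equiv σ.toEquiv _ _ (fun j => rfl)
    rw [h1]
    simp only [Multigraph.inc, sub_mul, ite_mul, one_mul, zero_mul]
    rw [Finset.sum_sub_distrib, Finset.sum_ite_eq, Finset.sum_ite_eq]
    have hsplit : ∀ w : V, (if w ∈ Finset.univ.erase v0 then g w else 0) = g w := by
      intro w
      split_ifs with h
      · rfl
      · have hw : w = v0 := by simpa using h
        rw [hw, hg]
    rw [hsplit, hsplit]
  have hcard : U.card + 1 = Fintype.card V := by omega
  have hspan : G.IsSpanningTree U ↔ ∀ v w : V, G.Reach U v w :=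
    ⟨fun h => h.1, fun h => ⟨h, hcard⟩⟩
  have hadjsymm : ∀ a b, G.Adj U a b → G.Adj U b a := by
    rintro a b ⟨e, he, h | h⟩
    · exact ⟨e, he, Or.inr h⟩
    · exact ⟨e, he, Or.inl h⟩
  have hsymm : ∀ a b, G.Reach U a b → G.Reach U b a := by
    intro a b h
    induction h with
    | refl => exact Relation.ReflTransGen.refl
    | tail _ h2 ih => exact Relation.ReflTransGen.head (hadjsymm _ _ h2) ih
  -- Claim A : not spanning implies det = 0
  have claimA : ¬ (∀ v w : V, G.Reach U v w) → M.det = 0 := by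
    intro hns
    obtain ⟨u, hu⟩ : ∃ u, ¬ G.Reach U v0 u := by
      by_contra h
      push_neg at h
      exact hns fun v w => (hsymm _ _ (h v)).trans (h w)
    have hC : ∀ e ∈ U, (G.Reach U v0 (G.src e) ↔ G.Reach U v0 (G.tgt e)) := by
      intro e he
      constructor
      · intro h; exact h.tail ⟨e, he, Or.inl ⟨rfl, rfl⟩⟩
      · intro h; exact h.tail ⟨e, he, Or.inr ⟨rfl, rfl⟩⟩
    set g : V → ℚ := fun v => if G.Reach U v0 v then 0 else 1 with hgdef
    have hg0 : g v0 = 0 := by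
      simp only [hgdef]
      exact if_pos Relation.ReflTransGen.refl
    rw [← Matrix.exists_mulVec_eq_zero_iff]
    refine ⟨fun j => g (σ j), ?_, ?_⟩
    · intro hzero
      have hune : u ≠ v0 := fun h => hu (h ▸ Relation.ReflTransGen.refl)
      have hum : u ∈ Finset.univ.erase v0 :=
        Finset.mem_erase.mpr ⟨hune, Finset.mem_univ u⟩
      have h2 := congrFun hzero (σ.symm ⟨u, hum⟩)
      have hσ : ((σ (σ.symm ⟨u, hum⟩)) : V) = u := by rw [OrderIso.apply_symm_apply]
      rw [hσ] at h2
      simp [hgdef, hu] at h2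
    · funext i
      have hk := key g hg0 (ρ i)
      simp only [Matrix.mulVec, dotProduct, hMdef, Matrix.of_apply, Pi.zero_apply]
      rw [hk]
      by_cases hr : G.Reach U v0 (G.src (ρ i))
      · have hr2 : G.Reach U v0 (G.tgt (ρ i)) := (hC _ (ρ i).2).mp hr
        simp [hgdef, hr, hr2]
      · have hr2 : ¬ G.Reach U v0 (G.tgt (ρ i)) := fun h => hr ((hC _ (ρ i).2).mpr h)
        simp [hgdef, hr, hr2]
  -- Claim B : spanning implies det ≠ 0
  have claimB : (∀ v w : V, G.Reach U v w) → M.det ≠ 0 := by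
    intro hall hdet
    obtain ⟨x, hx0, hx⟩ := Matrix.exists_mulVec_eq_zero_iff.mpr hdet
    set g : V → ℚ :=
      fun v => if h : v ∈ Finset.univ.erase v0 then x (σ.symm ⟨v, h⟩) else 0 with hgdef
    have hg0 : g v0 = 0 := by simp [hgdef]
    have hgx : ∀ j, g (σ j) = x j := by
      intro j
      have h : ((σ j : V)) ∈ Finset.univ.erase v0 := (σ j).2
      rw [hgdef]
      dsimp only
      rw [dif_pos h]
      have he : (⟨(σ j : V), h⟩ : {v // v ∈ Finset.univ.erase v0}) = σ j := rfl
      rw [he, OrderIso.symm_apply_apply]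
    have hedge : ∀ e ∈ U, g (G.src e) = g (G.tgt e) := by
      intro e he
      have hi := congrFun hx (ρ.symm ⟨e, he⟩)
      simp only [Matrix.mulVec, dotProduct, hMdef, Matrix.of_apply,
        Pi.zero_apply, OrderIso.apply_symm_apply] at hi
      have h2 : g (G.src e) - g (G.tgt e) = 0 := by
        rw [← key g hg0 e, Finset.sum_congr rfl (fun j _ => by rw [hgx])]
        exact hi
      linarith
    have hreach : ∀ a b, G.Reach U a b → g a = g b := by
      intro a b h
      induction h with
      | refl => rfl
      | tail _ h2 ih =>
        rcases h2 with ⟨e, he, ⟨h3, h4⟩ | ⟨h3, h4⟩⟩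
        · rw [ih, ← h3, ← h4]; exact hedge e he
        · rw [ih, ← h3, ← h4]; exact (hedge e he).symm
    apply hx0
    funext j
    show x j = 0
    rw [← hgx j, ← hreach v0 _ (hall v0 _), hg0]
  -- total unimodularity
  have hTU : M.det ∈ ({-1, 0, 1} : Set ℚ) := by
    apply tu_det
    intro i
    have hs : ∀ w : V, ∃ s : Option (Fin m), ∀ j,
        (if w = ↑(σ j) then (1 : ℚ) else 0) = optInd s j := by
      intro w
      by_cases h : w ∈ Finset.univ.erase v0
      · refine ⟨some (σ.symm ⟨w, h⟩), fun j => ?_⟩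
        have hiff : (w = ↑(σ j)) ↔ (σ.symm ⟨w, h⟩ = j) := by
          rw [OrderIso.symm_apply_eq]
          exact ⟨fun hh => Subtype.ext hh, fun hh => congrArg Subtype.val hh⟩
        simp only [optInd, Option.some.injEq, hiff]
      · refine ⟨none, fun j => ?_⟩
        have hw : w = v0 := by simpa using h
        have hne : w ≠ ↑(σ j) := by
          rw [hw]
          intro hh
          exact (Finset.mem_erase.mp (σ j).2).1 hh.symm
        simp [optInd, hne]
    obtain ⟨s, hsspec⟩ := hs (G.src (ρ i))
    obtain ⟨t, htspec⟩ := hs (G.tgt (ρ i))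
    refine ⟨s, t, fun j => ?_⟩
    rw [hMdef]
    simp only [Matrix.of_apply, Multigraph.inc]
    rw [hsspec j, htspec j]
  refine ⟨hrdet ▸ hTU, ?_⟩
  rw [hrdet, hspan]
  constructor
  · intro h
    by_contra hns
    exact h (claimA hns)
  · exact claimB
end

section
/- If e is an edge of G with endpoints v and w not lying in P, then the contracted spanning forest polynomial satisfies Φ^{P/e}_{G/e} = Σ_{p part of P} Σ_{p_1 ⊔ p_2 = p} Φ^{P\p, p_1∪{v}, p_2∪{w}}_{G\e}, where the inner sum is over ordered decompositions of p into two disjoint (possibly empty) subsets. -/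
namespace Multigraph

variable {E V : Type*}

/-- The graph `G \ e0`, obtained by deleting the edge `e0` (vertices are kept). -/
def deleteEdge (G : Multigraph E V) (e0 : E) : Multigraph {e : E // e ≠ e0} V :=
  ⟨fun e => G.src e, fun e => G.tgt e⟩

/-- The vertex map of the contraction `G / e0` (for `e0` not a self-loop): the target of
`e0` is identified with its source, every other vertex is unchanged. -/
def contractMap (G : Multigraph E V) [DecidableEq V] (e0 : E) (h : G.src e0 ≠ G.tgt e0)
    (v : V) : {v : V // v ≠ G.tgt e0} :=
  if hv : v = G.tgt e0 then ⟨G.src e0, h⟩ else ⟨v, hv⟩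

/-- The graph `G / e0`, obtained by contracting the edge `e0` (deleting it and identifying
its two endpoints). -/
def contract (G : Multigraph E V) [DecidableEq V] (e0 : E) (h : G.src e0 ≠ G.tgt e0) :
    Multigraph {e : E // e ≠ e0} {v : V // v ≠ G.tgt e0} :=
  ⟨fun e => G.contractMap e0 h (G.src e), fun e => G.contractMap e0 h (G.tgt e)⟩

end Multigraph

namespace Multigraph

variable {E V : Type*}

lemma reach_symm {H : Multigraph E V} {F : Finset E} {a b : V} (h : H.Reach F a b) :
    H.Reach F b a :=
  Relation.ReflTransGen.mono (fun _ _ ⟨e, he, hh⟩ => ⟨e, he, hh.symm⟩) _ _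
    (Relation.ReflTransGen.swap b a h)

lemma reach_trans {H : Multigraph E V} {F : Finset E} {a b c : V} (h1 : H.Reach F a b)
    (h2 : H.Reach F b c) : H.Reach F a c :=
  Relation.ReflTransGen.trans h1 h2

lemma reach_refl {H : Multigraph E V} {F : Finset E} {a : V} : H.Reach F a a :=
  Relation.ReflTransGen.refl

lemma reach_mono {H : Multigraph E V} {F F' : Finset E} (hFF : F ⊆ F') {a b : V}
    (h : H.Reach F a b) : H.Reach F' a b :=
  Relation.ReflTransGen.mono (fun _ _ ⟨e, he, hh⟩ => ⟨e, hFF he, hh⟩) _ _ h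

lemma rtg_wire {α : Type*} (r : α → α → Prop) (s t a b : α) :
    Relation.ReflTransGen (fun x y => r x y ∨ (x = s ∧ y = t) ∨ (x = t ∧ y = s)) a b ↔
      Relation.ReflTransGen r a b ∨
      (Relation.ReflTransGen r a s ∧ Relation.ReflTransGen r t b) ∨
      (Relation.ReflTransGen r a t ∧ Relation.ReflTransGen r s b) := by
  constructor
  · intro h
    induction h with
    | refl => exact Or.inl .refl
    | tail h1 hstep ih =>
      rcases hstep with hr | ⟨hx, hy⟩ | ⟨hx, hy⟩
      · rcases ih with h | ⟨ha, hb⟩ | ⟨ha, hb⟩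
        · exact Or.inl (h.tail hr)
        · exact Or.inr (Or.inl ⟨ha, hb.tail hr⟩)
        · exact Or.inr (Or.inr ⟨ha, hb.tail hr⟩)
      · subst hx; subst hy
        rcases ih with h | ⟨ha, hb⟩ | ⟨ha, hb⟩
        · exact Or.inr (Or.inl ⟨h, .refl⟩)
        · exact Or.inr (Or.inl ⟨ha, .refl⟩)
        · exact Or.inl ha
      · subst hx; subst hy
        rcases ih with h | ⟨ha, hb⟩ | ⟨ha, hb⟩
        · exact Or.inr (Or.inr ⟨h, .refl⟩)
        · exact Or.inl ha
        · exact Or.inr (Or.inr ⟨ha, .refl⟩)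
  · have mono : ∀ {x y : α}, Relation.ReflTransGen r x y →
        Relation.ReflTransGen (fun x y => r x y ∨ (x = s ∧ y = t) ∨ (x = t ∧ y = s)) x y :=
      fun h => Relation.ReflTransGen.mono (fun _ _ hr => Or.inl hr) _ _ h
    rintro (h | ⟨h1, h2⟩ | ⟨h1, h2⟩)
    · exact mono h
    · exact ((mono h1).tail (Or.inr (Or.inl ⟨rfl, rfl⟩))).trans (mono h2)
    · exact ((mono h1).tail (Or.inr (Or.inr ⟨rfl, rfl⟩))).trans (mono h2)

lemma adj_insert_iff (H : Multigraph E V) [DecidableEq E] (e : E) (F : Finset E) (x y : V) :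
    H.Adj (insert e F) x y ↔
      H.Adj F x y ∨ (x = H.src e ∧ y = H.tgt e) ∨ (x = H.tgt e ∧ y = H.src e) := by
  constructor
  · rintro ⟨e', he', h⟩
    rcases Finset.mem_insert.1 he' with rfl | he'
    · rcases h with ⟨h1, h2⟩ | ⟨h1, h2⟩
      · exact Or.inr (Or.inl ⟨h1.symm, h2.symm⟩)
      · exact Or.inr (Or.inr ⟨h2.symm, h1.symm⟩)
    · exact Or.inl ⟨e', he', h⟩
  · rintro (⟨e', he', h⟩ | ⟨rfl, rfl⟩ | ⟨rfl, rfl⟩)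
    · exact ⟨e', Finset.mem_insert_of_mem he', h⟩
    · exact ⟨e, Finset.mem_insert_self e F, Or.inl ⟨rfl, rfl⟩⟩
    · exact ⟨e, Finset.mem_insert_self e F, Or.inr ⟨rfl, rfl⟩⟩

lemma reach_insert_iff (H : Multigraph E V) [DecidableEq E] (e : E) (F : Finset E) (a b : V) :
    H.Reach (insert e F) a b ↔ H.Reach F a b ∨
      (H.Reach F a (H.src e) ∧ H.Reach F (H.tgt e) b) ∨
      (H.Reach F a (H.tgt e) ∧ H.Reach F (H.src e) b) := by
  rw [show H.Reach (insert e F) a b ↔ Relation.ReflTransGen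
      (fun x y => H.Adj F x y ∨ (x = H.src e ∧ y = H.tgt e) ∨ (x = H.tgt e ∧ y = H.src e)) a b from
    ⟨fun h => Relation.ReflTransGen.mono (fun x y hxy => (adj_insert_iff H e F x y).1 hxy) _ _ h,
     fun h => Relation.ReflTransGen.mono (fun x y hxy => (adj_insert_iff H e F x y).2 hxy) _ _ h⟩]
  exact rtg_wire _ _ _ a b

lemma reach_empty_iff (H : Multigraph E V) (a b : V) : H.Reach ∅ a b ↔ a = b := by
  constructor
  · intro h
    induction h with
    | refl => rfl
    | tail h1 h2 ih => obtain ⟨e, he, -⟩ := h2; exact absurd he (Finset.notMem_empty e)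
  · rintro rfl; exact .refl

/-- The setoid of connectivity classes. -/
def reachSetoid (H : Multigraph E V) (F : Finset E) : Setoid V :=
  ⟨H.Reach F, ⟨fun _ => reach_refl, fun h => reach_symm h, fun h1 h2 => reach_trans h1 h2⟩⟩

lemma card_le_card_add_ncomp (H : Multigraph E V) [Fintype V] [DecidableEq E] (F : Finset E) :
    Fintype.card V ≤ F.card + Nat.card (Quotient (H.reachSetoid F)) := by
  classical
  induction F using Finset.induction_on with
  | empty =>
    rw [Finset.card_empty, zero_add, ← Nat.card_eq_fintype_card]
    exact Nat.card_le_card_of_injective (Quotient.mk'' (s₁ := H.reachSetoid ∅))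
      fun a b h => (reach_empty_iff H a b).1 (Quotient.exact' h)
  | insert e F he ih =>
    have key : Nat.card (Quotient (H.reachSetoid F)) ≤
        Nat.card (Quotient (H.reachSetoid (insert e F))) + 1 := by
      let φ : Quotient (H.reachSetoid F) → Quotient (H.reachSetoid (insert e F)) :=
        Quotient.map' id fun a b h => reach_mono (Finset.subset_insert e F) h
      let g : Quotient (H.reachSetoid F) → Quotient (H.reachSetoid (insert e F)) ⊕ Unit :=
        fun x => if x = Quotient.mk'' (H.tgt e) then Sum.inr () else Sum.inl (φ x)
    -- injectivity of g
      have key' : ∀ a b : V, g (Quotient.mk'' a) = g (Quotient.mk'' b) →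
          (Quotient.mk'' a : Quotient (H.reachSetoid F)) = Quotient.mk'' b := by
        intro a b hxy
        by_cases hx : (Quotient.mk'' a : Quotient (H.reachSetoid F)) = Quotient.mk'' (H.tgt e) <;>
          by_cases hy : (Quotient.mk'' b : Quotient (H.reachSetoid F)) = Quotient.mk'' (H.tgt e)
        · exact hx.trans hy.symm
        · simp only [g, if_pos hx, if_neg hy] at hxy
          exact absurd hxy (by simp)
        · simp only [g, if_neg hx, if_pos hy] at hxy
          exact absurd hxy (by simp)
        · simp only [g, if_neg hx, if_neg hy, Sum.inl.injEq, φ, Quotient.map'_mk'', id_eq] at hxy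
          have h2 : H.Reach (insert e F) a b := Quotient.exact' hxy
          rcases (reach_insert_iff H e F a b).1 h2 with h | ⟨h1, h2⟩ | ⟨h1, h2⟩
          · exact Quotient.sound' h
          · exact absurd (Quotient.sound' (reach_symm h2)) hy
          · exact absurd (Quotient.sound' h1) hx
      have hg : Function.Injective g := fun x y => Quotient.inductionOn₂' x y key'
      calc Nat.card (Quotient (H.reachSetoid F))
          ≤ Nat.card (Quotient (H.reachSetoid (insert e F)) ⊕ Unit) :=
            Nat.card_le_card_of_injective g hg
        _ = Nat.card (Quotient (H.reachSetoid (insert e F))) + 1 := by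
            rw [Nat.card_sum, show Nat.card Unit = 1 from Nat.card_unique]
    calc Fintype.card V ≤ F.card + Nat.card (Quotient (H.reachSetoid F)) := ih
      _ ≤ F.card + (Nat.card (Quotient (H.reachSetoid (insert e F))) + 1) := by omega
      _ = (insert e F).card + Nat.card (Quotient (H.reachSetoid (insert e F))) := by
          rw [Finset.card_insert_of_notMem he]; omega

section Contract

variable (G : Multigraph E V) [DecidableEq V] (e0 : E) (hloop : G.src e0 ≠ G.tgt e0)

lemma contractMap_tgt : G.contractMap e0 hloop (G.tgt e0) = ⟨G.src e0, hloop⟩ :=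
  dif_pos rfl

lemma contractMap_of_ne {a : V} (ha : a ≠ G.tgt e0) :
    G.contractMap e0 hloop a = ⟨a, ha⟩ := dif_neg ha

lemma contractMap_src : G.contractMap e0 hloop (G.src e0) = ⟨G.src e0, hloop⟩ :=
  contractMap_of_ne G e0 hloop hloop

lemma contractMap_eq_iff {a b : V} :
    G.contractMap e0 hloop a = G.contractMap e0 hloop b ↔
      a = b ∨ (a = G.src e0 ∧ b = G.tgt e0) ∨ (a = G.tgt e0 ∧ b = G.src e0) := by
  unfold contractMap
  split_ifs with ha hb hb
  · simp only [Subtype.mk.injEq]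
    constructor
    · intro _; exact Or.inl (ha.trans hb.symm)
    · intro _; trivial
  · simp only [Subtype.mk.injEq]
    constructor
    · intro h; exact Or.inr (Or.inr ⟨ha, h.symm⟩)
    · rintro (rfl | ⟨rfl, h2⟩ | ⟨h1, h2⟩)
      · exact absurd ha hb
      · exact (hloop ha).elim
      · exact h2.symm
  · simp only [Subtype.mk.injEq]
    constructor
    · intro h; exact Or.inr (Or.inl ⟨h, hb⟩)
    · rintro (rfl | ⟨h1, h2⟩ | ⟨h1, h2⟩)
      · exact absurd hb ha
      · exact h1
      · exact (ha h1).elim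
  · simp only [Subtype.mk.injEq]
    constructor
    · exact Or.inl
    · rintro (rfl | ⟨h1, h2⟩ | ⟨h1, h2⟩)
      · rfl
      · exact (hb h2).elim
      · exact (ha h1).elim

lemma adj_contract_iff (F : Finset {e : E // e ≠ e0}) (x y : {v : V // v ≠ G.tgt e0}) :
    (G.contract e0 hloop).Adj F x y ↔
      ∃ a b : V, (G.deleteEdge e0).Adj F a b ∧
        G.contractMap e0 hloop a = x ∧ G.contractMap e0 hloop b = y := by
  constructor
  · rintro ⟨e, he, (⟨h1, h2⟩ | ⟨h1, h2⟩)⟩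
    · exact ⟨G.src e.1, G.tgt e.1, ⟨e, he, Or.inl ⟨rfl, rfl⟩⟩, h1, h2⟩
    · exact ⟨G.tgt e.1, G.src e.1, ⟨e, he, Or.inr ⟨rfl, rfl⟩⟩, h2, h1⟩
  · rintro ⟨a, b, ⟨e, he, (⟨h1, h2⟩ | ⟨h1, h2⟩)⟩, hx, hy⟩
    · refine ⟨e, he, Or.inl ⟨?_, ?_⟩⟩
      · show G.contractMap e0 hloop (G.src e.1) = x
        rw [show G.src e.1 = a from h1]; exact hx
      · show G.contractMap e0 hloop (G.tgt e.1) = y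
        rw [show G.tgt e.1 = b from h2]; exact hy
    · refine ⟨e, he, Or.inr ⟨?_, ?_⟩⟩
      · show G.contractMap e0 hloop (G.src e.1) = y
        rw [show G.src e.1 = b from h1]; exact hy
      · show G.contractMap e0 hloop (G.tgt e.1) = x
        rw [show G.tgt e.1 = a from h2]; exact hx

lemma cm_rtg {F : Finset {e : E // e ≠ e0}} {a b : V}
    (h : G.contractMap e0 hloop a = G.contractMap e0 hloop b) :
    Relation.ReflTransGen (fun x y => (G.deleteEdge e0).Adj F x y ∨
      (x = G.src e0 ∧ y = G.tgt e0) ∨ (x = G.tgt e0 ∧ y = G.src e0)) a b := by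
  rcases (contractMap_eq_iff G e0 hloop).1 h with rfl | ⟨h1, h2⟩ | ⟨h1, h2⟩
  · exact .refl
  · exact Relation.ReflTransGen.single (Or.inr (Or.inl ⟨h1, h2⟩))
  · exact Relation.ReflTransGen.single (Or.inr (Or.inr ⟨h1, h2⟩))

lemma reach_contract_iff (F : Finset {e : E // e ≠ e0}) (a b : V) :
    (G.contract e0 hloop).Reach F (G.contractMap e0 hloop a) (G.contractMap e0 hloop b) ↔
      (G.deleteEdge e0).Reach F a b ∨
      ((G.deleteEdge e0).Reach F a (G.src e0) ∧ (G.deleteEdge e0).Reach F (G.tgt e0) b) ∨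
      ((G.deleteEdge e0).Reach F a (G.tgt e0) ∧ (G.deleteEdge e0).Reach F (G.src e0) b) := by
  unfold Reach
  rw [← rtg_wire ((G.deleteEdge e0).Adj F) (G.src e0) (G.tgt e0) a b]
  constructor
  · intro h
    have key : ∀ x y : {v : V // v ≠ G.tgt e0}, (G.contract e0 hloop).Reach F x y →
        ∀ a b : V, G.contractMap e0 hloop a = x → G.contractMap e0 hloop b = y →
        Relation.ReflTransGen (fun x y => (G.deleteEdge e0).Adj F x y ∨
          (x = G.src e0 ∧ y = G.tgt e0) ∨ (x = G.tgt e0 ∧ y = G.src e0)) a b := by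
      intro x y h
      induction h with
      | refl => intro a b hax hbx; exact cm_rtg G e0 hloop (hax.trans hbx.symm)
      | tail h1 hstep ih =>
        intro a b hax hby
        obtain ⟨a', b', hadj, ha', hb'⟩ := (adj_contract_iff G e0 hloop F _ _).1 hstep
        exact ((ih a a' hax ha').tail (Or.inl hadj)).trans
          (cm_rtg G e0 hloop (hb'.trans hby.symm))
    exact key _ _ h a b rfl rfl
  · intro h
    induction h with
    | refl => exact .refl
    | tail h1 hstep ih =>
      rcases hstep with hadj | ⟨rfl, rfl⟩ | ⟨rfl, rfl⟩
      · exact ih.tail ((adj_contract_iff G e0 hloop F _ _).2 ⟨_, _, hadj, rfl, rfl⟩)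
      · rwa [contractMap_tgt, ← contractMap_src G e0 hloop]
      · rwa [contractMap_src, ← contractMap_tgt G e0 hloop]

end Contract
end Multigraph


namespace Multigraph

variable {E V : Type*}

section Main

variable [Fintype E] [DecidableEq E] [Fintype V] [DecidableEq V]
  (G : Multigraph E V) (e0 : E) (hloop : G.src e0 ≠ G.tgt e0) (parts : Finset (Finset V))

lemma image_cm_inj (hnotin : ∀ p ∈ parts, G.src e0 ∉ p ∧ G.tgt e0 ∉ p) :
    ∀ p ∈ parts, ∀ q ∈ parts,
      p.image (G.contractMap e0 hloop) = q.image (G.contractMap e0 hloop) → p = q := by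
  have key : ∀ p ∈ parts, ∀ q ∈ parts,
      p.image (G.contractMap e0 hloop) = q.image (G.contractMap e0 hloop) → p ⊆ q := by
    intro p hp q hq h u hu
    have h2 : G.contractMap e0 hloop u ∈ q.image (G.contractMap e0 hloop) :=
      h ▸ Finset.mem_image_of_mem _ hu
    obtain ⟨u', hu', heq⟩ := Finset.mem_image.1 h2
    rcases (contractMap_eq_iff G e0 hloop).1 heq with rfl | ⟨h1, h2⟩ | ⟨h1, h2⟩
    · exact hu'
    · exact absurd (h2 ▸ hu) (hnotin p hp).2
    · exact absurd (h1 ▸ hu') (hnotin q hq).2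
  exact fun p hp q hq h => Finset.Subset.antisymm (key p hp q hq h) (key q hq p hp h.symm)

lemma contract_ISF_iff (hP : IsSetPartition parts)
    (hnotin : ∀ p ∈ parts, G.src e0 ∉ p ∧ G.tgt e0 ∉ p) (F : Finset {e : E // e ≠ e0}) :
    (G.contract e0 hloop).IsSpanningForest
        (parts.image (Finset.image (G.contractMap e0 hloop))) F ↔
      (F.card + parts.card + 1 = Fintype.card V ∧
      (∀ p ∈ parts, ∀ a ∈ p, ∀ b ∈ p,
        (G.contract e0 hloop).Reach F (G.contractMap e0 hloop a) (G.contractMap e0 hloop b)) ∧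
      (∀ p ∈ parts, ∀ q ∈ parts, p ≠ q → ∀ a ∈ p, ∀ b ∈ q,
        ¬ (G.contract e0 hloop).Reach F (G.contractMap e0 hloop a) (G.contractMap e0 hloop b)) ∧
      (∀ a : V, ∃ p ∈ parts, ∃ u ∈ p,
        (G.contract e0 hloop).Reach F (G.contractMap e0 hloop a) (G.contractMap e0 hloop u))) := by
  classical
  have hinj := image_cm_inj G e0 hloop parts hnotin
  have hcard : (parts.image (Finset.image (G.contractMap e0 hloop))).card = parts.card :=
    Finset.card_image_of_injOn fun p hp q hq h => hinj p hp q hq h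
  have hsub : Fintype.card {x : V // x ≠ G.tgt e0} = Fintype.card V - 1 := by
    rw [Fintype.card_subtype]
    rw [show Finset.univ.filter (fun x : V => x ≠ G.tgt e0) = Finset.univ.erase (G.tgt e0) from
      Finset.filter_ne' Finset.univ (G.tgt e0)]
    rw [Finset.card_erase_of_mem (Finset.mem_univ _), Finset.card_univ]
  have hpos : 0 < Fintype.card V := Fintype.card_pos_iff.2 ⟨G.tgt e0⟩
  unfold IsSpanningForest
  constructor
  · rintro ⟨h1, h2, h3, h4⟩
    rw [hcard, hsub] at h1
    refine ⟨by omega, ?_, ?_, ?_⟩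
    · intro p hp a ha b hb
      exact h2 _ (Finset.mem_image_of_mem _ hp) _ (Finset.mem_image_of_mem _ ha)
        _ (Finset.mem_image_of_mem _ hb)
    · intro p hp q hq hpq a ha b hb
      exact h3 _ (Finset.mem_image_of_mem _ hp) _ (Finset.mem_image_of_mem _ hq)
        (fun hh => hpq (hinj p hp q hq hh)) _ (Finset.mem_image_of_mem _ ha)
        _ (Finset.mem_image_of_mem _ hb)
    · intro a
      obtain ⟨pb, hpb, y, hy, hr⟩ := h4 (G.contractMap e0 hloop a)
      obtain ⟨p, hp, rfl⟩ := Finset.mem_image.1 hpb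
      obtain ⟨u, hu, rfl⟩ := Finset.mem_image.1 hy
      exact ⟨p, hp, u, hu, hr⟩
  · rintro ⟨h1, h2, h3, h4⟩
    refine ⟨by rw [hcard, hsub]; omega, ?_, ?_, ?_⟩
    · intro pb hpb x hx y hy
      obtain ⟨p, hp, rfl⟩ := Finset.mem_image.1 hpb
      obtain ⟨a, ha, rfl⟩ := Finset.mem_image.1 hx
      obtain ⟨b, hb, rfl⟩ := Finset.mem_image.1 hy
      exact h2 p hp a ha b hb
    · intro pb hpb qb hqb hne x hx y hy
      obtain ⟨p, hp, rfl⟩ := Finset.mem_image.1 hpb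
      obtain ⟨q, hq, rfl⟩ := Finset.mem_image.1 hqb
      obtain ⟨a, ha, rfl⟩ := Finset.mem_image.1 hx
      obtain ⟨b, hb, rfl⟩ := Finset.mem_image.1 hy
      exact h3 p hp q hq (fun h => hne (by rw [h])) a ha b hb
    · intro x
      obtain ⟨p, hp, u, hu, hr⟩ := h4 x.1
      refine ⟨_, Finset.mem_image_of_mem _ hp, _, Finset.mem_image_of_mem _ hu, ?_⟩
      rwa [show G.contractMap e0 hloop x.1 = x from contractMap_of_ne G e0 hloop x.2] at hr

lemma ISF_delete_to_contract (hP : IsSetPartition parts)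
    (hnotin : ∀ p ∈ parts, G.src e0 ∉ p ∧ G.tgt e0 ∉ p) {F : Finset {e : E // e ≠ e0}}
    {p p1 : Finset V} (hp : p ∈ parts) (hp1 : p1 ⊆ p)
    (hF : (G.deleteEdge e0).IsSpanningForest
      (insert (insert (G.src e0) p1)
        (insert (insert (G.tgt e0) (p \ p1)) (parts.erase p))) F) :
    (G.contract e0 hloop).IsSpanningForest
      (parts.image (Finset.image (G.contractMap e0 hloop))) F := by
  classical
  obtain ⟨hcard, hwithin, hcross, hcover⟩ := hF
  set v := G.src e0 with hv
  set w := G.tgt e0 with hw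
  set A := insert v p1 with hA
  set B := insert w (p \ p1) with hB
  set Q := insert A (insert B (parts.erase p)) with hQdef
  have hAQ : A ∈ Q := Finset.mem_insert_self _ _
  have hBQ : B ∈ Q := Finset.mem_insert_of_mem (Finset.mem_insert_self _ _)
  have hEQ : ∀ q ∈ parts.erase p, q ∈ Q :=
    fun q hq => Finset.mem_insert_of_mem (Finset.mem_insert_of_mem hq)
  have hvA : v ∈ A := Finset.mem_insert_self _ _
  have hwB : w ∈ B := Finset.mem_insert_self _ _
  have hvB : v ∉ B := by
    intro h
    rcases Finset.mem_insert.1 h with h | h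
    · exact hloop h
    · exact (hnotin p hp).1 (Finset.mem_sdiff.1 h).1
  have hwA : w ∉ A := by
    intro h
    rcases Finset.mem_insert.1 h with h | h
    · exact hloop h.symm
    · exact (hnotin p hp).2 (hp1 h)
  have hAB : A ≠ B := fun h => hvB (h ▸ hvA)
  have hAe : ∀ q ∈ parts.erase p, A ≠ q :=
    fun q hq h => (hnotin q (Finset.mem_of_mem_erase hq)).1 (h ▸ hvA)
  have hBe : ∀ q ∈ parts.erase p, B ≠ q :=
    fun q hq h => (hnotin q (Finset.mem_of_mem_erase hq)).2 (h ▸ hwB)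
  have hQcard : Q.card = parts.card + 1 := by
    rw [hQdef, Finset.card_insert_of_notMem, Finset.card_insert_of_notMem
      (fun h => hBe _ h rfl), Finset.card_erase_of_mem hp]
    · have : 0 < parts.card := Finset.card_pos.2 ⟨p, hp⟩
      omega
    · intro h
      rcases Finset.mem_insert.1 h with h | h
      · exact hAB h
      · exact hAe _ h rfl
  have hRiff := reach_contract_iff G e0 hloop F
  -- master claims
  have hTOv : ∀ {q x}, q ∈ parts → x ∈ q → (G.deleteEdge e0).Reach F x v → q = p ∧ x ∈ p1 := by
    intro q x hq hx h
    by_cases hqp : q = p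
    · subst hqp
      refine ⟨rfl, ?_⟩
      by_contra hx1
      exact hcross B hBQ A hAQ hAB.symm x
        (Finset.mem_insert_of_mem (Finset.mem_sdiff.2 ⟨hx, hx1⟩)) v hvA h
    · exact absurd h (hcross q (hEQ q (Finset.mem_erase.2 ⟨hqp, hq⟩)) A hAQ
        ((hAe q (Finset.mem_erase.2 ⟨hqp, hq⟩)).symm) x hx v hvA)
  have hTOw : ∀ {q x}, q ∈ parts → x ∈ q → (G.deleteEdge e0).Reach F x w → q = p ∧ x ∉ p1 := by
    intro q x hq hx h
    by_cases hqp : q = p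
    · subst hqp
      refine ⟨rfl, ?_⟩
      intro hx1
      exact hcross A hAQ B hBQ hAB x (Finset.mem_insert_of_mem hx1) w hwB h
    · exact absurd h (hcross q (hEQ q (Finset.mem_erase.2 ⟨hqp, hq⟩)) B hBQ
        ((hBe q (Finset.mem_erase.2 ⟨hqp, hq⟩)).symm) x hx w hwB)
  have hMain : ∀ {q q' a b}, q ∈ parts → q' ∈ parts → a ∈ q → b ∈ q' →
      (G.deleteEdge e0).Reach F a b → q = q' := by
    intro q q' a b hq hq' ha hb h
    by_cases hqp : q = p <;> by_cases hqp' : q' = p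
    · rw [hqp, hqp']
    · subst hqp
      exfalso
      by_cases ha1 : a ∈ p1
      · exact hcross A hAQ q' (hEQ q' (Finset.mem_erase.2 ⟨hqp', hq'⟩))
          ((hAe q' (Finset.mem_erase.2 ⟨hqp', hq'⟩))) a (Finset.mem_insert_of_mem ha1) b hb h
      · exact hcross B hBQ q' (hEQ q' (Finset.mem_erase.2 ⟨hqp', hq'⟩))
          ((hBe q' (Finset.mem_erase.2 ⟨hqp', hq'⟩))) a
          (Finset.mem_insert_of_mem (Finset.mem_sdiff.2 ⟨ha, ha1⟩)) b hb h
    · subst hqp'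
      exfalso
      by_cases hb1 : b ∈ p1
      · exact hcross q (hEQ q (Finset.mem_erase.2 ⟨hqp, hq⟩)) A hAQ
          ((hAe q (Finset.mem_erase.2 ⟨hqp, hq⟩)).symm) a ha b (Finset.mem_insert_of_mem hb1) h
      · exact hcross q (hEQ q (Finset.mem_erase.2 ⟨hqp, hq⟩)) B hBQ
          ((hBe q (Finset.mem_erase.2 ⟨hqp, hq⟩)).symm) a ha b
          (Finset.mem_insert_of_mem (Finset.mem_sdiff.2 ⟨hb, hb1⟩)) h
    · by_contra hne
      exact hcross q (hEQ q (Finset.mem_erase.2 ⟨hqp, hq⟩)) q'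
        (hEQ q' (Finset.mem_erase.2 ⟨hqp', hq'⟩)) hne a ha b hb h
  rw [contract_ISF_iff G e0 hloop parts hP hnotin F]
  refine ⟨by omega, ?_, ?_, ?_⟩
  · intro q hq a ha b hb
    rw [hRiff]
    by_cases hqp : q = p
    · subst hqp
      by_cases ha1 : a ∈ p1 <;> by_cases hb1 : b ∈ p1
      · exact Or.inl (hwithin A hAQ a (Finset.mem_insert_of_mem ha1)
          b (Finset.mem_insert_of_mem hb1))
      · exact Or.inr (Or.inl ⟨hwithin A hAQ a (Finset.mem_insert_of_mem ha1) v hvA,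
          hwithin B hBQ w hwB b (Finset.mem_insert_of_mem (Finset.mem_sdiff.2 ⟨hb, hb1⟩))⟩)
      · exact Or.inr (Or.inr ⟨hwithin B hBQ a
          (Finset.mem_insert_of_mem (Finset.mem_sdiff.2 ⟨ha, ha1⟩)) w hwB,
          hwithin A hAQ v hvA b (Finset.mem_insert_of_mem hb1)⟩)
      · exact Or.inl (hwithin B hBQ a
          (Finset.mem_insert_of_mem (Finset.mem_sdiff.2 ⟨ha, ha1⟩))
          b (Finset.mem_insert_of_mem (Finset.mem_sdiff.2 ⟨hb, hb1⟩)))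
    · exact Or.inl (hwithin q (hEQ q (Finset.mem_erase.2 ⟨hqp, hq⟩)) a ha b hb)
  · intro q hq q' hq' hne a ha b hb h
    rcases (hRiff a b).1 h with h | ⟨h1, h2⟩ | ⟨h1, h2⟩
    · exact hne (hMain hq hq' ha hb h)
    · exact hne ((hTOv hq ha h1).1.trans (hTOw hq' hb (reach_symm h2)).1.symm)
    · exact hne ((hTOw hq ha h1).1.trans (hTOv hq' hb (reach_symm h2)).1.symm)
  · intro a
    obtain ⟨X, hX, u, hu, hr⟩ := hcover a
    obtain ⟨u0, hu0⟩ : p.Nonempty :=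
      Finset.nonempty_iff_ne_empty.2 (fun h => hP.1 (h ▸ hp))
    rcases Finset.mem_insert.1 hX with rfl | hX'
    · by_cases h0 : u0 ∈ p1
      · have h2 : (G.deleteEdge e0).Reach F u u0 :=
          hwithin A hAQ u hu u0 (Finset.mem_insert_of_mem h0)
        exact ⟨p, hp, u0, hu0, (hRiff a u0).2 (Or.inl (reach_trans hr h2))⟩
      · have h2 : (G.deleteEdge e0).Reach F u v := hwithin A hAQ u hu v hvA
        have h3 : (G.deleteEdge e0).Reach F w u0 :=
          hwithin B hBQ w hwB u0 (Finset.mem_insert_of_mem (Finset.mem_sdiff.2 ⟨hu0, h0⟩))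
        exact ⟨p, hp, u0, hu0, (hRiff a u0).2 (Or.inr (Or.inl ⟨reach_trans hr h2, h3⟩))⟩
    · rcases Finset.mem_insert.1 hX' with rfl | hX''
      · by_cases h0 : u0 ∈ p1
        · have h2 : (G.deleteEdge e0).Reach F u w := hwithin B hBQ u hu w hwB
          have h3 : (G.deleteEdge e0).Reach F v u0 :=
            hwithin A hAQ v hvA u0 (Finset.mem_insert_of_mem h0)
          exact ⟨p, hp, u0, hu0, (hRiff a u0).2 (Or.inr (Or.inr ⟨reach_trans hr h2, h3⟩))⟩
        · have h2 : (G.deleteEdge e0).Reach F u u0 :=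
            hwithin B hBQ u hu u0 (Finset.mem_insert_of_mem (Finset.mem_sdiff.2 ⟨hu0, h0⟩))
          exact ⟨p, hp, u0, hu0, (hRiff a u0).2 (Or.inl (reach_trans hr h2))⟩
      · exact ⟨X, Finset.mem_of_mem_erase hX'', u, hu, (hRiff a u).2 (Or.inl hr)⟩

include hloop in
lemma ISF_delete_unique (hP : IsSetPartition parts)
    (hnotin : ∀ p ∈ parts, G.src e0 ∉ p ∧ G.tgt e0 ∉ p) {F : Finset {e : E // e ≠ e0}}
    {p p1 p' p1' : Finset V}
    (hp : p ∈ parts) (hp1 : p1 ⊆ p) (hp' : p' ∈ parts) (hp1' : p1' ⊆ p')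
    (h1 : (G.deleteEdge e0).IsSpanningForest
      (insert (insert (G.src e0) p1)
        (insert (insert (G.tgt e0) (p \ p1)) (parts.erase p))) F)
    (h2 : (G.deleteEdge e0).IsSpanningForest
      (insert (insert (G.src e0) p1')
        (insert (insert (G.tgt e0) (p' \ p1')) (parts.erase p'))) F) :
    p = p' ∧ p1 = p1' := by
  classical
  set v := G.src e0 with hv
  set w := G.tgt e0 with hw
  have char : ∀ (q q1 : Finset V), q ∈ parts → q1 ⊆ q →
      (G.deleteEdge e0).IsSpanningForest
        (insert (insert v q1) (insert (insert w (q \ q1)) (parts.erase q))) F →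
      ∀ u, (∃ r ∈ parts, u ∈ r) →
        (((G.deleteEdge e0).Reach F v u ↔ u ∈ q1) ∧
         ((G.deleteEdge e0).Reach F w u ↔ u ∈ q \ q1)) := by
    intro q q1 hq hq1 hF u hu
    obtain ⟨r, hr, hur⟩ := hu
    obtain ⟨hcard, hwithin, hcross, hcover⟩ := hF
    set A := insert v q1 with hA
    set B := insert w (q \ q1) with hB
    set Qq := insert A (insert B (parts.erase q)) with hQdef
    have hAQ : A ∈ Qq := Finset.mem_insert_self _ _
    have hBQ : B ∈ Qq := Finset.mem_insert_of_mem (Finset.mem_insert_self _ _)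
    have hEQ : ∀ x ∈ parts.erase q, x ∈ Qq :=
      fun x hx => Finset.mem_insert_of_mem (Finset.mem_insert_of_mem hx)
    have hvA : v ∈ A := Finset.mem_insert_self _ _
    have hwB : w ∈ B := Finset.mem_insert_self _ _
    have hvB : v ∉ B := by
      intro h
      rcases Finset.mem_insert.1 h with h | h
      · exact hloop h
      · exact (hnotin q hq).1 (Finset.mem_sdiff.1 h).1
    have hAB : A ≠ B := fun h => hvB (h ▸ hvA)
    have hAe : ∀ x ∈ parts.erase q, A ≠ x :=
      fun x hx h => (hnotin x (Finset.mem_of_mem_erase hx)).1 (h ▸ hvA)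
    have hBe : ∀ x ∈ parts.erase q, B ≠ x :=
      fun x hx h => (hnotin x (Finset.mem_of_mem_erase hx)).2 (h ▸ hwB)
    constructor
    · constructor
      · intro h
        by_cases hrq : r = q
        · subst hrq
          by_contra hu1
          exact hcross A hAQ B hBQ hAB v hvA u
            (Finset.mem_insert_of_mem (Finset.mem_sdiff.2 ⟨hur, hu1⟩)) h
        · exact absurd h (hcross A hAQ r (hEQ r (Finset.mem_erase.2 ⟨hrq, hr⟩))
            (hAe r (Finset.mem_erase.2 ⟨hrq, hr⟩)) v hvA u hur)
      · intro h
        exact hwithin A hAQ v hvA u (Finset.mem_insert_of_mem h)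
    · constructor
      · intro h
        by_cases hrq : r = q
        · subst hrq
          refine Finset.mem_sdiff.2 ⟨hur, ?_⟩
          intro hu1
          exact hcross B hBQ A hAQ hAB.symm w hwB u (Finset.mem_insert_of_mem hu1) h
        · exact absurd h (hcross B hBQ r (hEQ r (Finset.mem_erase.2 ⟨hrq, hr⟩))
            (hBe r (Finset.mem_erase.2 ⟨hrq, hr⟩)) w hwB u hur)
      · intro h
        exact hwithin B hBQ w hwB u (Finset.mem_insert_of_mem h)
  have e1 : p1 = p1' := by
    ext u
    constructor
    · intro hu
      exact ((char p' p1' hp' hp1' h2 u ⟨p, hp, hp1 hu⟩).1).1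
        (((char p p1 hp hp1 h1 u ⟨p, hp, hp1 hu⟩).1).2 hu)
    · intro hu
      exact ((char p p1 hp hp1 h1 u ⟨p', hp', hp1' hu⟩).1).1
        (((char p' p1' hp' hp1' h2 u ⟨p', hp', hp1' hu⟩).1).2 hu)
  have e2 : p \ p1 = p' \ p1' := by
    ext u
    constructor
    · intro hu
      exact ((char p' p1' hp' hp1' h2 u ⟨p, hp, (Finset.mem_sdiff.1 hu).1⟩).2).1
        (((char p p1 hp hp1 h1 u ⟨p, hp, (Finset.mem_sdiff.1 hu).1⟩).2).2 hu)
    · intro hu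
      exact ((char p p1 hp hp1 h1 u ⟨p', hp', (Finset.mem_sdiff.1 hu).1⟩).2).1
        (((char p' p1' hp' hp1' h2 u ⟨p', hp', (Finset.mem_sdiff.1 hu).1⟩).2).2 hu)
  refine ⟨?_, e1⟩
  rw [← Finset.union_sdiff_of_subset hp1, ← Finset.union_sdiff_of_subset hp1', e2, e1]

include hloop in
lemma ISF_contract_to_delete (hP : IsSetPartition parts)
    (hnotin : ∀ p ∈ parts, G.src e0 ∉ p ∧ G.tgt e0 ∉ p) {F : Finset {e : E // e ≠ e0}}
    (hF : (G.contract e0 hloop).IsSpanningForest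
      (parts.image (Finset.image (G.contractMap e0 hloop))) F) :
    ∃ p ∈ parts, ∃ p1 ∈ p.powerset, (G.deleteEdge e0).IsSpanningForest
      (insert (insert (G.src e0) p1)
        (insert (insert (G.tgt e0) (p \ p1)) (parts.erase p))) F := by
  classical
  rw [contract_ISF_iff G e0 hloop parts hP hnotin F] at hF
  obtain ⟨hcard, hwithin, hcross, hcover⟩ := hF
  have hRiff := reach_contract_iff G e0 hloop F
  obtain ⟨p, hp, u0, hu0, hR0⟩ := hcover (G.src e0)
  set p1 := p.filter (fun u => (G.deleteEdge e0).Reach F (G.src e0) u) with hp1def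
  have hp1 : p1 ⊆ p := Finset.filter_subset _ _
  -- no path from src to tgt in the deleted graph
  have hnvw : ¬ (G.deleteEdge e0).Reach F (G.src e0) (G.tgt e0) := by
    intro hvw
    have hRD : ∀ a b : V,
        (G.contract e0 hloop).Reach F (G.contractMap e0 hloop a) (G.contractMap e0 hloop b) →
        (G.deleteEdge e0).Reach F a b := by
      intro a b h
      rcases (hRiff a b).1 h with h | ⟨h1, h2⟩ | ⟨h1, h2⟩
      · exact h
      · exact reach_trans (reach_trans h1 hvw) h2
      · exact reach_trans (reach_trans h1 (reach_symm hvw)) h2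
    have hc : ∀ a : V, ∃ q, q ∈ parts ∧ ∃ u ∈ q, (G.deleteEdge e0).Reach F a u := by
      intro a
      obtain ⟨q, hq, u, hu, hr⟩ := hcover a
      exact ⟨q, hq, u, hu, hRD a u hr⟩
    let f : V → {q // q ∈ parts} := fun a => ⟨Classical.choose (hc a),
      (Classical.choose_spec (hc a)).1⟩
    have hf : ∀ a, ∃ u ∈ (f a).1, (G.deleteEdge e0).Reach F a u :=
      fun a => (Classical.choose_spec (hc a)).2
    have hfcong : ∀ a b, (G.deleteEdge e0).Reach F a b → f a = f b := by
      intro a b hab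
      obtain ⟨ua, hua, hra⟩ := hf a
      obtain ⟨ub, hub, hrb⟩ := hf b
      have hd : (G.deleteEdge e0).Reach F ua ub :=
        reach_trans (reach_symm hra) (reach_trans hab hrb)
      by_contra hne
      exact hcross _ (f a).2 _ (f b).2 (fun h => hne (Subtype.ext h)) ua hua ub hub
        ((hRiff ua ub).2 (Or.inl hd))
    let g : Quotient ((G.deleteEdge e0).reachSetoid F) → {q // q ∈ parts} :=
      Quotient.lift f fun a b h => hfcong a b h
    have hginj : Function.Injective g := by
      have key : ∀ a b : V, g (Quotient.mk'' a) = g (Quotient.mk'' b) →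
          (Quotient.mk'' a : Quotient ((G.deleteEdge e0).reachSetoid F)) = Quotient.mk'' b := by
        intro a b h
        obtain ⟨ua, hua, hra⟩ := hf a
        obtain ⟨ub, hub, hrb⟩ := hf b
        have hfeq : f a = f b := h
        have hC : (G.contract e0 hloop).Reach F (G.contractMap e0 hloop ua)
            (G.contractMap e0 hloop ub) :=
          hwithin _ (f b).2 ua (hfeq ▸ hua) ub hub
        exact Quotient.sound' (reach_trans hra (reach_trans (hRD _ _ hC) (reach_symm hrb)))
      exact fun x y => Quotient.inductionOn₂' x y key
    have hle := card_le_card_add_ncomp (G.deleteEdge e0) F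
    have hb : Nat.card (Quotient ((G.deleteEdge e0).reachSetoid F)) ≤ parts.card := by
      calc Nat.card (Quotient ((G.deleteEdge e0).reachSetoid F))
          ≤ Nat.card {q // q ∈ parts} := Nat.card_le_card_of_injective g hginj
        _ = parts.card := by rw [Nat.card_eq_fintype_card, Fintype.card_coe]
    omega
  -- every vertex of p is reached from src or tgt
  have hRv : ∀ u ∈ p, (G.deleteEdge e0).Reach F (G.src e0) u ∨
      (G.deleteEdge e0).Reach F (G.tgt e0) u := by
    intro u hu
    have hC : (G.contract e0 hloop).Reach F (G.contractMap e0 hloop (G.src e0))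
        (G.contractMap e0 hloop u) :=
      reach_trans hR0 (hwithin p hp u0 hu0 u hu)
    rcases (hRiff _ _).1 hC with h | ⟨h1, h2⟩ | ⟨h1, h2⟩
    · exact Or.inl h
    · exact Or.inr h2
    · exact absurd h1 hnvw
  -- vertices of other parts are unreachable from src and tgt
  have hq_clean : ∀ q ∈ parts, q ≠ p → ∀ u ∈ q,
      ¬ (G.deleteEdge e0).Reach F (G.src e0) u ∧
      ¬ (G.deleteEdge e0).Reach F (G.tgt e0) u := by
    intro q hq hqp u hu
    constructor
    · intro h
      have hC : (G.contract e0 hloop).Reach F (G.contractMap e0 hloop u)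
          (G.contractMap e0 hloop u0) :=
        reach_trans (reach_symm ((hRiff _ _).2 (Or.inl h))) hR0
      exact hcross q hq p hp hqp u hu u0 hu0 hC
    · intro h
      have h1 : (G.contract e0 hloop).Reach F (G.contractMap e0 hloop (G.tgt e0))
          (G.contractMap e0 hloop u) := (hRiff _ _).2 (Or.inl h)
      rw [contractMap_tgt, ← contractMap_src G e0 hloop] at h1
      exact hcross q hq p hp hqp u hu u0 hu0 (reach_trans (reach_symm h1) hR0)
  refine ⟨p, hp, p1, Finset.mem_powerset.2 hp1, ?_⟩
  set v := G.src e0 with hv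
  set w := G.tgt e0 with hw
  set A := insert v p1 with hA
  set B := insert w (p \ p1) with hB
  set Q := insert A (insert B (parts.erase p)) with hQdef
  have hAQ : A ∈ Q := Finset.mem_insert_self _ _
  have hBQ : B ∈ Q := Finset.mem_insert_of_mem (Finset.mem_insert_self _ _)
  have hEQ : ∀ q ∈ parts.erase p, q ∈ Q :=
    fun q hq => Finset.mem_insert_of_mem (Finset.mem_insert_of_mem hq)
  have hvA : v ∈ A := Finset.mem_insert_self _ _
  have hwB : w ∈ B := Finset.mem_insert_self _ _
  have hvB : v ∉ B := by
    intro h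
    rcases Finset.mem_insert.1 h with h | h
    · exact hloop h
    · exact (hnotin p hp).1 (Finset.mem_sdiff.1 h).1
  have hwA : w ∉ A := by
    intro h
    rcases Finset.mem_insert.1 h with h | h
    · exact hloop h.symm
    · exact (hnotin p hp).2 (hp1 h)
  have hAB : A ≠ B := fun h => hvB (h ▸ hvA)
  have hAe : ∀ q ∈ parts.erase p, A ≠ q :=
    fun q hq h => (hnotin q (Finset.mem_of_mem_erase hq)).1 (h ▸ hvA)
  have hBe : ∀ q ∈ parts.erase p, B ≠ q :=
    fun q hq h => (hnotin q (Finset.mem_of_mem_erase hq)).2 (h ▸ hwB)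
  have hQcard : Q.card = parts.card + 1 := by
    rw [hQdef, Finset.card_insert_of_notMem, Finset.card_insert_of_notMem
      (fun h => hBe _ h rfl), Finset.card_erase_of_mem hp]
    · have : 0 < parts.card := Finset.card_pos.2 ⟨p, hp⟩
      omega
    · intro h
      rcases Finset.mem_insert.1 h with h | h
      · exact hAB h
      · exact hAe _ h rfl
  have hAr : ∀ x ∈ A, (G.deleteEdge e0).Reach F v x := by
    intro x hx
    rcases Finset.mem_insert.1 hx with rfl | hx
    · exact reach_refl
    · exact (Finset.mem_filter.1 hx).2
  have hBr : ∀ x ∈ B, (G.deleteEdge e0).Reach F w x := by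
    intro x hx
    rcases Finset.mem_insert.1 hx with rfl | hx
    · exact reach_refl
    · obtain ⟨hxp, hx1⟩ := Finset.mem_sdiff.1 hx
      rcases hRv x hxp with h | h
      · exact absurd (Finset.mem_filter.2 ⟨hxp, h⟩) hx1
      · exact h
  refine ⟨by omega, ?_, ?_, ?_⟩
  · -- within
    intro X hX x hx y hy
    rcases Finset.mem_insert.1 hX with rfl | hX'
    · exact reach_trans (reach_symm (hAr x hx)) (hAr y hy)
    rcases Finset.mem_insert.1 hX' with rfl | hX''
    · exact reach_trans (reach_symm (hBr x hx)) (hBr y hy)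
    · have hXp : X ∈ parts := Finset.mem_of_mem_erase hX''
      have hXne : X ≠ p := Finset.ne_of_mem_erase hX''
      have hc := hwithin X hXp x hx y hy
      rcases (hRiff x y).1 hc with h | ⟨h1, h2⟩ | ⟨h1, h2⟩
      · exact h
      · exact absurd (reach_symm h1) (hq_clean X hXp hXne x hx).1
      · exact absurd (reach_symm h1) (hq_clean X hXp hXne x hx).2
  · -- cross
    intro X hX Y hY hXY x hx y hy hreach
    have hclass : ∀ Z ∈ Q, ∀ z ∈ Z,
        (Z = A ∧ (G.deleteEdge e0).Reach F v z) ∨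
        (Z = B ∧ (G.deleteEdge e0).Reach F w z) ∨ (Z ∈ parts.erase p ∧ z ∈ Z) := by
      intro Z hZ z hz
      rcases Finset.mem_insert.1 hZ with rfl | hZ'
      · exact Or.inl ⟨rfl, hAr z hz⟩
      rcases Finset.mem_insert.1 hZ' with rfl | hZ''
      · exact Or.inr (Or.inl ⟨rfl, hBr z hz⟩)
      · exact Or.inr (Or.inr ⟨hZ'', hz⟩)
    rcases hclass X hX x hx with ⟨rfl, hxv⟩ | ⟨rfl, hxw⟩ | ⟨hXe, hx'⟩ <;>
      rcases hclass Y hY y hy with ⟨rfl, hyv⟩ | ⟨rfl, hyw⟩ | ⟨hYe, hy'⟩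
    · exact hXY rfl
    · exact hnvw (reach_trans hxv (reach_trans hreach (reach_symm hyw)))
    · exact (hq_clean Y (Finset.mem_of_mem_erase hYe) (Finset.ne_of_mem_erase hYe) y hy').1
        (reach_trans hxv hreach)
    · exact hnvw (reach_trans hyv (reach_trans (reach_symm hreach) (reach_symm hxw)))
    · exact hXY rfl
    · exact (hq_clean Y (Finset.mem_of_mem_erase hYe) (Finset.ne_of_mem_erase hYe) y hy').2
        (reach_trans hxw hreach)
    · exact (hq_clean X (Finset.mem_of_mem_erase hXe) (Finset.ne_of_mem_erase hXe) x hx').1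
        (reach_trans hyv (reach_symm hreach))
    · exact (hq_clean X (Finset.mem_of_mem_erase hXe) (Finset.ne_of_mem_erase hXe) x hx').2
        (reach_trans hyw (reach_symm hreach))
    · exact hcross X (Finset.mem_of_mem_erase hXe) Y (Finset.mem_of_mem_erase hYe)
        hXY x hx' y hy' ((hRiff x y).2 (Or.inl hreach))
  · -- cover
    intro a
    obtain ⟨q, hq, u, hu, hr⟩ := hcover a
    rcases (hRiff a u).1 hr with h | ⟨h1, h2⟩ | ⟨h1, h2⟩
    · by_cases hqp : q = p
      · subst hqp
        by_cases h0 : u ∈ p1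
        · exact ⟨A, hAQ, u, Finset.mem_insert_of_mem h0, h⟩
        · exact ⟨B, hBQ, u, Finset.mem_insert_of_mem (Finset.mem_sdiff.2 ⟨hu, h0⟩), h⟩
      · exact ⟨q, hEQ q (Finset.mem_erase.2 ⟨hqp, hq⟩), u, hu, h⟩
    · exact ⟨A, hAQ, v, hvA, h1⟩
    · exact ⟨B, hBQ, w, hwB, h1⟩

end Main
end Multigraph

/-- If `e0` is an edge of `G` with (distinct) endpoints `v = src e0` and
`w = tgt e0` not lying in the partition `P`, then
`Φ^{P/e0}_{G/e0} = Σ_{p ∈ P} Σ_{p₁ ⊔ p₂ = p} Φ^{P∖p, p₁∪{v}, p₂∪{w}}_{G∖e0}`,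
the inner sum being over ordered decompositions of `p` into two disjoint (possibly empty)
subsets. -/
theorem forestPoly_contract_decomposition {E V : Type*} [Fintype E] [DecidableEq E]
    [Fintype V] [DecidableEq V] (G : Multigraph E V) (e0 : E)
    (hloop : G.src e0 ≠ G.tgt e0) (parts : Finset (Finset V))
    (hP : IsSetPartition parts)
    (hnotin : ∀ p ∈ parts, G.src e0 ∉ p ∧ G.tgt e0 ∉ p) :
    (G.contract e0 hloop).forestPoly
        (parts.image (Finset.image (G.contractMap e0 hloop)))
      = ∑ p ∈ parts, ∑ p1 ∈ p.powerset,
          (G.deleteEdge e0).forestPoly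
            (insert (insert (G.src e0) p1)
              (insert (insert (G.tgt e0) (p \ p1)) (parts.erase p))) := by
  classical
  unfold Multigraph.forestPoly
  have key : ∀ F : Finset {e : E // e ≠ e0},
      (if (G.contract e0 hloop).IsSpanningForest
          (parts.image (Finset.image (G.contractMap e0 hloop))) F then
        (∏ e ∈ Fᶜ, MvPolynomial.X e : MvPolynomial {e : E // e ≠ e0} ℚ) else 0)
      = ∑ p ∈ parts, ∑ p1 ∈ p.powerset,
          (if (G.deleteEdge e0).IsSpanningForest
              (insert (insert (G.src e0) p1)
                (insert (insert (G.tgt e0) (p \ p1)) (parts.erase p))) F then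
            (∏ e ∈ Fᶜ, MvPolynomial.X e : MvPolynomial {e : E // e ≠ e0} ℚ) else 0) := by
    intro F
    by_cases hC : (G.contract e0 hloop).IsSpanningForest
        (parts.image (Finset.image (G.contractMap e0 hloop))) F
    · obtain ⟨p, hp, p1, hp1m, hD⟩ :=
        Multigraph.ISF_contract_to_delete G e0 hloop parts hP hnotin hC
      have hp1 : p1 ⊆ p := Finset.mem_powerset.1 hp1m
      rw [if_pos hC]
      have inner : (∑ p1' ∈ p.powerset,
          (if (G.deleteEdge e0).IsSpanningForest
              (insert (insert (G.src e0) p1')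
                (insert (insert (G.tgt e0) (p \ p1')) (parts.erase p))) F then
            (∏ e ∈ Fᶜ, MvPolynomial.X e : MvPolynomial {e : E // e ≠ e0} ℚ) else 0))
          = ∏ e ∈ Fᶜ, MvPolynomial.X e := by
        have side : ∀ p1' ∈ p.powerset, p1' ≠ p1 →
            (if (G.deleteEdge e0).IsSpanningForest
                (insert (insert (G.src e0) p1')
                  (insert (insert (G.tgt e0) (p \ p1')) (parts.erase p))) F then
              (∏ e ∈ Fᶜ, MvPolynomial.X e : MvPolynomial {e : E // e ≠ e0} ℚ) else 0) = 0 := by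
          intro p1' hm hne
          have hno : ¬ (G.deleteEdge e0).IsSpanningForest
              (insert (insert (G.src e0) p1')
                (insert (insert (G.tgt e0) (p \ p1')) (parts.erase p))) F := fun hD' =>
            hne (Multigraph.ISF_delete_unique G e0 hloop parts hP hnotin hp
              (Finset.mem_powerset.1 hm) hp hp1 hD' hD).2
          rw [if_neg hno]
        rw [Finset.sum_eq_single_of_mem p1 hp1m side, if_pos hD]
      have side2 : ∀ p' ∈ parts, p' ≠ p → (∑ p1' ∈ p'.powerset,
          (if (G.deleteEdge e0).IsSpanningForest
              (insert (insert (G.src e0) p1')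
                (insert (insert (G.tgt e0) (p' \ p1')) (parts.erase p'))) F then
            (∏ e ∈ Fᶜ, MvPolynomial.X e : MvPolynomial {e : E // e ≠ e0} ℚ) else 0)) = 0 := by
        intro p' hm hne
        refine Finset.sum_eq_zero fun p1' hm' => ?_
        have hno : ¬ (G.deleteEdge e0).IsSpanningForest
            (insert (insert (G.src e0) p1')
              (insert (insert (G.tgt e0) (p' \ p1')) (parts.erase p'))) F := fun hD' =>
          hne (Multigraph.ISF_delete_unique G e0 hloop parts hP hnotin hm
            (Finset.mem_powerset.1 hm') hp hp1 hD' hD).1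
        rw [if_neg hno]
      rw [Finset.sum_eq_single_of_mem p hp side2, inner]
    · rw [if_neg hC]
      symm
      refine Finset.sum_eq_zero fun p hpm => Finset.sum_eq_zero fun p1 hm => ?_
      have hno : ¬ (G.deleteEdge e0).IsSpanningForest
          (insert (insert (G.src e0) p1)
            (insert (insert (G.tgt e0) (p \ p1)) (parts.erase p))) F := fun hD =>
        hC (Multigraph.ISF_delete_to_contract G e0 hloop parts hP hnotin hpm
          (Finset.mem_powerset.1 hm) hD)
      rw [if_neg hno]
  calc (∑ F : Finset {e : E // e ≠ e0},
        if (G.contract e0 hloop).IsSpanningForest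
            (parts.image (Finset.image (G.contractMap e0 hloop))) F then
          (∏ e ∈ Fᶜ, MvPolynomial.X e : MvPolynomial {e : E // e ≠ e0} ℚ) else 0)
      = ∑ F : Finset {e : E // e ≠ e0}, ∑ p ∈ parts, ∑ p1 ∈ p.powerset,
          (if (G.deleteEdge e0).IsSpanningForest
              (insert (insert (G.src e0) p1)
                (insert (insert (G.tgt e0) (p \ p1)) (parts.erase p))) F then
            (∏ e ∈ Fᶜ, MvPolynomial.X e : MvPolynomial {e : E // e ≠ e0} ℚ) else 0) :=
        Finset.sum_congr rfl fun F _ => key F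
    _ = ∑ p ∈ parts, ∑ F : Finset {e : E // e ≠ e0}, ∑ p1 ∈ p.powerset,
          (if (G.deleteEdge e0).IsSpanningForest
              (insert (insert (G.src e0) p1)
                (insert (insert (G.tgt e0) (p \ p1)) (parts.erase p))) F then
            (∏ e ∈ Fᶜ, MvPolynomial.X e : MvPolynomial {e : E // e ≠ e0} ℚ) else 0) :=
        Finset.sum_comm
    _ = ∑ p ∈ parts, ∑ p1 ∈ p.powerset, ∑ F : Finset {e : E // e ≠ e0},
          (if (G.deleteEdge e0).IsSpanningForest
              (insert (insert (G.src e0) p1)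
                (insert (insert (G.tgt e0) (p \ p1)) (parts.erase p))) F then
            (∏ e ∈ Fᶜ, MvPolynomial.X e : MvPolynomial {e : E // e ≠ e0} ℚ) else 0) :=
        Finset.sum_congr rfl fun p _ => Finset.sum_comm
end

section
/- Vanishing of split Dodgson polynomials: if G is a two-vertex join of G_1 and G_2, and edges i, j lie in G_1 while edges k, l lie in G_2, then Ψ^{ij,kl}_G = 0. -/
section TwoVertexJoinAux

open Matrix

private lemma aux_rank_le_finrank {F : Type*} [Field F] {ι κ : Type*} [Fintype ι] [Fintype κ]
    [DecidableEq ι] (A : Matrix ι κ F) (U : Submodule F (ι → F))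
    (h : ∀ q, (fun p => A p q) ∈ U) : A.rank ≤ Module.finrank F U := by
  rw [Matrix.rank_eq_finrank_span_cols]
  refine Submodule.finrank_mono ?_
  rw [Submodule.span_le]
  rintro _ ⟨q, rfl⟩
  exact h q

private lemma aux_rank_add_le {F : Type*} [Field F] {ι κ : Type*} [Fintype ι] [Fintype κ]
    [DecidableEq ι] (A B : Matrix ι κ F) : (A + B).rank ≤ A.rank + B.rank := by
  rw [Matrix.rank_eq_finrank_span_cols, Matrix.rank_eq_finrank_span_cols,
    Matrix.rank_eq_finrank_span_cols]
  refine le_trans (Submodule.finrank_mono ?_) (Submodule.finrank_add_le_finrank_add_finrank _ _)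
  rw [Submodule.span_le]
  rintro _ ⟨q, rfl⟩
  refine Submodule.mem_sup.mpr ⟨Aᵀ q, Submodule.subset_span ⟨q, rfl⟩, Bᵀ q,
    Submodule.subset_span ⟨q, rfl⟩, ?_⟩
  funext p
  simp [Matrix.transpose_apply, Matrix.add_apply]

private def sumElimL (F : Type*) [Semiring F] (α : Type*) {β : Type*} :
    (β → F) →ₗ[F] (α ⊕ β → F) where
  toFun f := Sum.elim 0 f
  map_add' f g := by funext p; cases p <;> simp
  map_smul' r f := by funext p; cases p <;> simp

private lemma sum_ite_comp {mm : ℕ} {E M : Type*} [DecidableEq E] [Fintype E] [AddCommMonoid M]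
    (r : Fin mm → E) (s : Finset E) (hinj : Function.Injective r)
    (hmem : ∀ a, r a ∉ s) (hsurj : ∀ e ∉ s, ∃ a, r a = e) (e₀ : E) (g : E → M) :
    ∑ a, (if r a = e₀ then g (r a) else 0) = if e₀ ∈ s then 0 else g e₀ := by
  have himg : Finset.image r Finset.univ = sᶜ := by
    ext e
    simp only [Finset.mem_image, Finset.mem_univ, true_and, Finset.mem_compl]
    constructor
    · rintro ⟨a, rfl⟩; exact hmem a
    · intro he; exact hsurj e he
  have h1 : ∑ a, (if r a = e₀ then g (r a) else 0)
      = ∑ e ∈ Finset.image r Finset.univ, (if e = e₀ then g e else 0) := by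
    rw [Finset.sum_image (fun a _ b _ h => hinj h)]
  rw [h1, himg, Finset.sum_ite_eq' sᶜ e₀ g]
  by_cases h : e₀ ∈ s <;> simp [h]

private lemma sum_ite_comp' {mm : ℕ} {E M : Type*} [DecidableEq E] [Fintype E] [AddCommMonoid M]
    (r : Fin mm → E) (s : Finset E) (hinj : Function.Injective r)
    (hmem : ∀ a, r a ∉ s) (hsurj : ∀ e ∉ s, ∃ a, r a = e) (e₀ : E) (g : E → M) :
    ∑ a, (if e₀ = r a then g (r a) else 0) = if e₀ ∈ s then 0 else g e₀ := by
  rw [← sum_ite_comp r s hinj hmem hsurj e₀ g]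
  refine Finset.sum_congr rfl fun a _ => ?_
  by_cases h : r a = e₀
  · simp [h]
  · rw [if_neg h, if_neg fun he => h he.symm]

private lemma finrank_incSpan_le {E V F : Type*} [Fintype V] [DecidableEq V] [Field F]
    (G : Multigraph E V) (S : Finset V) (v1 : V) (hv1 : v1 ∈ S) (Es : Set E)
    (hend : ∀ e ∈ Es, G.src e ∈ S ∧ G.tgt e ∈ S) :
    Module.finrank F (Submodule.span F ((fun e => fun v => G.inc F e v) '' Es)) ≤ S.card - 1 := by
  classical
  set Q : Submodule F (V → F) :=
    { carrier := {f | (∀ v ∉ S, f v = 0) ∧ ∑ v ∈ S, f v = 0}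
      add_mem' := by
        rintro f g ⟨hf1, hf2⟩ ⟨hg1, hg2⟩
        refine ⟨fun v hv => by simp [Pi.add_apply, hf1 v hv, hg1 v hv], ?_⟩
        simp [Finset.sum_add_distrib, hf2, hg2]
      zero_mem' := by simp
      smul_mem' := by
        rintro a f ⟨hf1, hf2⟩
        refine ⟨fun v hv => by simp [hf1 v hv], ?_⟩
        simp [← Finset.mul_sum, hf2] } with hQdef
  have hle : Submodule.span F ((fun e => fun v => G.inc F e v) '' Es) ≤ Q := by
    rw [Submodule.span_le]
    rintro _ ⟨e, he, rfl⟩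
    constructor
    · intro v hv
      have h1 : G.src e ≠ v := fun h => hv (h ▸ (hend e he).1)
      have h2 : G.tgt e ≠ v := fun h => hv (h ▸ (hend e he).2)
      simp [Multigraph.inc, h1, h2]
    · simp only [Multigraph.inc, Finset.sum_sub_distrib]
      rw [Finset.sum_ite_eq S (G.src e) (fun _ => (1 : F)),
        Finset.sum_ite_eq S (G.tgt e) (fun _ => (1 : F))]
      simp [(hend e he).1, (hend e he).2]
  refine le_trans (Submodule.finrank_mono hle) ?_
  have hinj : Function.Injective
      ((LinearMap.funLeft F F (Subtype.val : {v : V // v ∈ S.erase v1} → V)).comp Q.subtype) := by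
    rw [← LinearMap.ker_eq_bot, Submodule.eq_bot_iff]
    rintro ⟨f, hf1, hf2⟩ hker
    rw [LinearMap.mem_ker] at hker
    have hev : ∀ v ∈ S.erase v1, f v = 0 := fun v hv => congrFun hker ⟨v, hv⟩
    have hsum : ∑ v ∈ S.erase v1, f v = 0 := Finset.sum_eq_zero hev
    have hfv1 : f v1 = 0 := by
      have h := Finset.add_sum_erase S f hv1
      rw [hsum, hf2] at h
      simpa using h
    have hf0 : f = 0 := by
      funext v
      by_cases hvS : v ∈ S
      · by_cases hvv : v = v1
        · rw [hvv]; exact hfv1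
        · exact hev v (Finset.mem_erase.mpr ⟨hvv, hvS⟩)
      · exact hf1 v hvS
    exact Subtype.ext hf0
  refine le_trans (LinearMap.finrank_le_finrank_of_injective hinj) ?_
  rw [Module.finrank_fintype_fun_eq_card, Fintype.card_coe, Finset.card_erase_of_mem hv1]

end TwoVertexJoinAux
section TwoVertexJoinDefs

open Matrix

variable {E V : Type*} [Fintype E] [LinearOrder E] [Fintype V] [DecidableEq V]

private noncomputable abbrev FE (E : Type*) : Type _ := FractionRing (MvPolynomial E ℚ)

private noncomputable def xF {E : Type*} (e : E) : FE E :=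
  algebraMap (MvPolynomial E ℚ) (FE E) (MvPolynomial.X e)

private lemma xF_ne_zero {E : Type*} (e : E) : xF e ≠ 0 := by
  intro h
  exact MvPolynomial.X_ne_zero e
    (IsFractionRing.injective (MvPolynomial E ℚ) (FE E) (by rw [map_zero]; exact h))

private lemma xF_mul_inv {E : Type*} (e : E) : xF e * (xF e)⁻¹ = 1 :=
  mul_inv_cancel₀ (xF_ne_zero e)

private noncomputable def Mmat (G : Multigraph E V) (v0 : V) {mm : ℕ} (r c : Fin mm → E) :
    Matrix (Fin mm ⊕ {v : V // v ≠ v0}) (Fin mm ⊕ {v : V // v ≠ v0}) (FE E) :=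
  Matrix.of fun p q =>
    algebraMap (MvPolynomial E ℚ) (FE E)
      (G.bigMatK v0 ∅ (Sum.map r id p) (Sum.map c id q))

private lemma Mmat_ll (G : Multigraph E V) (v0 : V) {mm : ℕ} (r c : Fin mm → E) (a b : Fin mm) :
    Mmat G v0 r c (Sum.inl a) (Sum.inl b) = if r a = c b then xF (r a) else 0 := by
  simp only [Mmat, Matrix.of_apply, Sum.map_inl, Multigraph.bigMatK,
    Matrix.fromBlocks_apply₁₁, Matrix.diagonal_apply, Finset.notMem_empty, if_false,
    apply_ite (algebraMap (MvPolynomial E ℚ) (FE E)), map_zero]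
  rfl

private lemma Mmat_lr (G : Multigraph E V) (v0 : V) {mm : ℕ} (r c : Fin mm → E) (a : Fin mm)
    (v : {v : V // v ≠ v0}) :
    Mmat G v0 r c (Sum.inl a) (Sum.inr v) = G.inc (FE E) (r a) ↑v := by
  simp only [Mmat, Matrix.of_apply, Sum.map_inl, Sum.map_inr, id_eq, Multigraph.bigMatK,
    Matrix.fromBlocks_apply₁₂, Multigraph.inc, map_sub,
    apply_ite (algebraMap (MvPolynomial E ℚ) (FE E)), _root_.map_one, map_zero]

private lemma Mmat_rl (G : Multigraph E V) (v0 : V) {mm : ℕ} (r c : Fin mm → E) (b : Fin mm)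
    (v : {v : V // v ≠ v0}) :
    Mmat G v0 r c (Sum.inr v) (Sum.inl b) = -(G.inc (FE E) (c b) ↑v) := by
  simp only [Mmat, Matrix.of_apply, Sum.map_inl, Sum.map_inr, id_eq, Multigraph.bigMatK,
    Matrix.fromBlocks_apply₂₁, Multigraph.inc, map_neg, map_sub,
    apply_ite (algebraMap (MvPolynomial E ℚ) (FE E)), _root_.map_one, map_zero]

private lemma Mmat_rr (G : Multigraph E V) (v0 : V) {mm : ℕ} (r c : Fin mm → E)
    (v w : {v : V // v ≠ v0}) :
    Mmat G v0 r c (Sum.inr v) (Sum.inr w) = 0 := by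
  simp [Mmat, Multigraph.bigMatK]

private noncomputable def Umat (G : Multigraph E V) (v0 : V) {mm : ℕ} (r : Fin mm → E)
    (k l : E) :
    Matrix (Fin mm ⊕ {v : V // v ≠ v0}) (Fin mm ⊕ {v : V // v ≠ v0}) (FE E) :=
  Matrix.fromBlocks 1 0
    (Matrix.of fun (v : {v : V // v ≠ v0}) a =>
      if r a ∈ ({k, l} : Finset E) then 0 else G.inc (FE E) (r a) ↑v * (xF (r a))⁻¹) 1

private noncomputable def Wmat (G : Multigraph E V) (v0 : V) {mm : ℕ} (c : Fin mm → E)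
    (i j : E) :
    Matrix (Fin mm ⊕ {v : V // v ≠ v0}) (Fin mm ⊕ {v : V // v ≠ v0}) (FE E) :=
  Matrix.fromBlocks 1
    (Matrix.of fun b (v : {v : V // v ≠ v0}) =>
      if c b ∈ ({i, j} : Finset E) then 0 else -(G.inc (FE E) (c b) ↑v * (xF (c b))⁻¹)) 0 1

private noncomputable def A1mat (G : Multigraph E V) (v0 : V) {mm : ℕ} (c : Fin mm → E)
    (i j : E) (E1 : Finset E) :
    Matrix (Fin mm ⊕ {v : V // v ≠ v0}) (Fin mm ⊕ {v : V // v ≠ v0}) (FE E) :=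
  Matrix.of fun p q =>
    match p, q with
    | Sum.inr v, Sum.inl b => if c b ∈ ({i, j} : Finset E) then -(G.inc (FE E) (c b) ↑v) else 0
    | Sum.inr v, Sum.inr w =>
        ∑ b, (if c b ∈ E1 ∧ c b ∉ ({i, j} : Finset E) then
          G.inc (FE E) (c b) ↑v * G.inc (FE E) (c b) ↑w * (xF (c b))⁻¹ else 0)
    | _, _ => 0

private noncomputable def A2mat (G : Multigraph E V) (v0 : V) {mm : ℕ} (r c : Fin mm → E)
    (k l : E) (E1 : Finset E) :
    Matrix (Fin mm ⊕ {v : V // v ≠ v0}) (Fin mm ⊕ {v : V // v ≠ v0}) (FE E) :=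
  Matrix.of fun p q =>
    match p, q with
    | Sum.inl a, Sum.inr w => if r a ∈ ({k, l} : Finset E) then G.inc (FE E) (r a) ↑w else 0
    | Sum.inr v, Sum.inr w =>
        ∑ b, (if c b ∉ E1 then
          G.inc (FE E) (c b) ↑v * G.inc (FE E) (c b) ↑w * (xF (c b))⁻¹ else 0)
    | _, _ => 0

private noncomputable def A3mat (G : Multigraph E V) (v0 : V) {mm : ℕ} (r c : Fin mm → E) :
    Matrix (Fin mm ⊕ {v : V // v ≠ v0}) (Fin mm ⊕ {v : V // v ≠ v0}) (FE E) :=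
  Matrix.of fun p q =>
    match p, q with
    | Sum.inl a, Sum.inl b => if r a = c b then xF (r a) else 0
    | _, _ => 0

end TwoVertexJoinDefs
section TwoVertexJoinProd

set_option linter.unusedSectionVars false

open Matrix

variable {E V : Type*} [Fintype E] [LinearOrder E] [Fintype V] [DecidableEq V]

private lemma MW_ll (G : Multigraph E V) (v0 : V) {mm : ℕ} (r c : Fin mm → E) (i j : E)
    (a b : Fin mm) :
    (Mmat G v0 r c * Wmat G v0 c i j) (Sum.inl a) (Sum.inl b)
      = if r a = c b then xF (r a) else 0 := by
  rw [Matrix.mul_apply, Fintype.sum_sum_type]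
  have h2 : ∀ v : {v : V // v ≠ v0},
      Mmat G v0 r c (Sum.inl a) (Sum.inr v) * Wmat G v0 c i j (Sum.inr v) (Sum.inl b) = 0 := by
    intro v; simp [Wmat]
  rw [Finset.sum_congr rfl (fun v _ => h2 v), Finset.sum_const_zero, add_zero]
  have h1 : ∀ b' : Fin mm,
      Mmat G v0 r c (Sum.inl a) (Sum.inl b') * Wmat G v0 c i j (Sum.inl b') (Sum.inl b)
        = if b' = b then (if r a = c b' then xF (r a) else 0) else 0 := by
    intro b'
    rw [Mmat_ll]
    simp only [Wmat, Matrix.fromBlocks_apply₁₁, Matrix.one_apply]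
    by_cases h : b' = b <;> simp [h]
  rw [Finset.sum_congr rfl (fun b' _ => h1 b'), Finset.sum_ite_eq' Finset.univ b]
  simp

private lemma MW_rl (G : Multigraph E V) (v0 : V) {mm : ℕ} (r c : Fin mm → E) (i j : E)
    (v : {v : V // v ≠ v0}) (b : Fin mm) :
    (Mmat G v0 r c * Wmat G v0 c i j) (Sum.inr v) (Sum.inl b)
      = -(G.inc (FE E) (c b) ↑v) := by
  rw [Matrix.mul_apply, Fintype.sum_sum_type]
  have h2 : ∀ w : {v : V // v ≠ v0},
      Mmat G v0 r c (Sum.inr v) (Sum.inr w) * Wmat G v0 c i j (Sum.inr w) (Sum.inl b) = 0 := by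
    intro w; rw [Mmat_rr]; exact zero_mul _
  rw [Finset.sum_congr rfl (fun w _ => h2 w), Finset.sum_const_zero, add_zero]
  have h1 : ∀ b' : Fin mm,
      Mmat G v0 r c (Sum.inr v) (Sum.inl b') * Wmat G v0 c i j (Sum.inl b') (Sum.inl b)
        = if b' = b then -(G.inc (FE E) (c b') ↑v) else 0 := by
    intro b'
    rw [Mmat_rl]
    simp only [Wmat, Matrix.fromBlocks_apply₁₁, Matrix.one_apply]
    by_cases h : b' = b <;> simp [h]
  rw [Finset.sum_congr rfl (fun b' _ => h1 b'), Finset.sum_ite_eq' Finset.univ b]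
  simp

private lemma MW_lr (G : Multigraph E V) (v0 : V) {mm : ℕ} (r c : Fin mm → E) (i j k l : E)
    (hc_inj : Function.Injective c) (hc_mem : ∀ b, c b ∉ ({k, l} : Finset E))
    (hc_surj : ∀ e ∉ ({k, l} : Finset E), ∃ b, c b = e)
    (a : Fin mm) (hra : r a ∉ ({i, j} : Finset E)) (w : {v : V // v ≠ v0}) :
    (Mmat G v0 r c * Wmat G v0 c i j) (Sum.inl a) (Sum.inr w)
      = if r a ∈ ({k, l} : Finset E) then G.inc (FE E) (r a) ↑w else 0 := by
  rw [Matrix.mul_apply, Fintype.sum_sum_type]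
  have h2 : ∑ v' : {v : V // v ≠ v0},
      Mmat G v0 r c (Sum.inl a) (Sum.inr v') * Wmat G v0 c i j (Sum.inr v') (Sum.inr w)
        = G.inc (FE E) (r a) ↑w := by
    have : ∀ v' : {v : V // v ≠ v0},
        Mmat G v0 r c (Sum.inl a) (Sum.inr v') * Wmat G v0 c i j (Sum.inr v') (Sum.inr w)
          = if v' = w then G.inc (FE E) (r a) ↑v' else 0 := by
      intro v'
      rw [Mmat_lr]
      simp only [Wmat, Matrix.fromBlocks_apply₂₂, Matrix.one_apply]
      by_cases h : v' = w <;> simp [h]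
    rw [Finset.sum_congr rfl (fun v' _ => this v'), Finset.sum_ite_eq' Finset.univ w]
    simp
  have h1 : ∑ b : Fin mm,
      Mmat G v0 r c (Sum.inl a) (Sum.inl b) * Wmat G v0 c i j (Sum.inl b) (Sum.inr w)
        = if r a ∈ ({k, l} : Finset E) then 0 else -(G.inc (FE E) (r a) ↑w) := by
    have hg : ∀ b : Fin mm,
        Mmat G v0 r c (Sum.inl a) (Sum.inl b) * Wmat G v0 c i j (Sum.inl b) (Sum.inr w)
          = if r a = c b then
              (fun e => xF e * (if e ∈ ({i, j} : Finset E) then 0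
                else -(G.inc (FE E) e ↑w * (xF e)⁻¹))) (c b) else 0 := by
      intro b
      rw [Mmat_ll]
      simp only [Wmat, Matrix.fromBlocks_apply₁₂, Matrix.of_apply]
      by_cases h : r a = c b
      · rw [if_pos h, if_pos h, h]
      · rw [if_neg h, if_neg h, zero_mul]
    rw [Finset.sum_congr rfl (fun b _ => hg b),
      sum_ite_comp' c ({k, l} : Finset E) hc_inj hc_mem hc_surj (r a)
        (fun e => xF e * (if e ∈ ({i, j} : Finset E) then 0
          else -(G.inc (FE E) e ↑w * (xF e)⁻¹)))]
    by_cases h : r a ∈ ({k, l} : Finset E)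
    · rw [if_pos h, if_pos h]
    · rw [if_neg h, if_neg h, if_neg hra, mul_neg, mul_comm (G.inc (FE E) (r a) ↑w) _,
        ← mul_assoc, xF_mul_inv, one_mul]
  rw [h1, h2]
  by_cases h : r a ∈ ({k, l} : Finset E)
  · rw [if_pos h, if_pos h, zero_add]
  · rw [if_neg h, if_neg h, neg_add_cancel]

private lemma MW_rr (G : Multigraph E V) (v0 : V) {mm : ℕ} (r c : Fin mm → E) (i j : E)
    (v w : {v : V // v ≠ v0}) :
    (Mmat G v0 r c * Wmat G v0 c i j) (Sum.inr v) (Sum.inr w)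
      = ∑ b, (if c b ∈ ({i, j} : Finset E) then 0
          else G.inc (FE E) (c b) ↑v * G.inc (FE E) (c b) ↑w * (xF (c b))⁻¹) := by
  rw [Matrix.mul_apply, Fintype.sum_sum_type]
  have h2 : ∀ v' : {v : V // v ≠ v0},
      Mmat G v0 r c (Sum.inr v) (Sum.inr v') * Wmat G v0 c i j (Sum.inr v') (Sum.inr w) = 0 := by
    intro v'; rw [Mmat_rr]; exact zero_mul _
  rw [Finset.sum_congr rfl (fun v' _ => h2 v'), Finset.sum_const_zero, add_zero]
  refine Finset.sum_congr rfl fun b _ => ?_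
  rw [Mmat_rl]
  simp only [Wmat, Matrix.fromBlocks_apply₁₂, Matrix.of_apply]
  by_cases h : c b ∈ ({i, j} : Finset E)
  · rw [if_pos h, if_pos h, mul_zero]
  · rw [if_neg h, if_neg h]
    ring

end TwoVertexJoinProd
section TwoVertexJoinUMW

set_option linter.unusedSectionVars false
set_option maxHeartbeats 1000000

open Matrix

variable {E V : Type*} [Fintype E] [LinearOrder E] [Fintype V] [DecidableEq V]

private lemma UMW_eq (G : Multigraph E V) (v0 : V) {mm : ℕ} (r c : Fin mm → E)
    (i j k l : E) (E1 : Finset E)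
    (hr_inj : Function.Injective r) (hr_mem : ∀ a, r a ∉ ({i, j} : Finset E))
    (hr_surj : ∀ e ∉ ({i, j} : Finset E), ∃ a, r a = e)
    (hc_inj : Function.Injective c) (hc_mem : ∀ b, c b ∉ ({k, l} : Finset E))
    (hc_surj : ∀ e ∉ ({k, l} : Finset E), ∃ b, c b = e)
    (hi : i ∈ E1) (hj : j ∈ E1) :
    Umat G v0 r k l * (Mmat G v0 r c * Wmat G v0 c i j)
      = A1mat G v0 c i j E1 + A2mat G v0 r c k l E1 + A3mat G v0 r c := by
  ext p q
  have hUrow1 : ∀ (a : Fin mm) (q' : Fin mm ⊕ {v : V // v ≠ v0}),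
      (Umat G v0 r k l * (Mmat G v0 r c * Wmat G v0 c i j)) (Sum.inl a) q'
        = (Mmat G v0 r c * Wmat G v0 c i j) (Sum.inl a) q' := by
    intro a q'
    rw [Matrix.mul_apply, Fintype.sum_sum_type]
    have h2 : ∀ v : {v : V // v ≠ v0},
        Umat G v0 r k l (Sum.inl a) (Sum.inr v)
          * (Mmat G v0 r c * Wmat G v0 c i j) (Sum.inr v) q' = 0 := by
      intro v; simp [Umat]
    rw [Finset.sum_congr rfl (fun v _ => h2 v), Finset.sum_const_zero, add_zero]
    have h1 : ∀ a' : Fin mm,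
        Umat G v0 r k l (Sum.inl a) (Sum.inl a')
          * (Mmat G v0 r c * Wmat G v0 c i j) (Sum.inl a') q'
          = if a' = a then (Mmat G v0 r c * Wmat G v0 c i j) (Sum.inl a') q' else 0 := by
      intro a'
      simp only [Umat, Matrix.fromBlocks_apply₁₁, Matrix.one_apply]
      by_cases h : a = a'
      · simp [h]
      · rw [if_neg h, if_neg (fun hh => h hh.symm), zero_mul]
    rw [Finset.sum_congr rfl (fun a' _ => h1 a'), Finset.sum_ite_eq' Finset.univ a]
    simp
  rcases p with a | v
  · rcases q with b | w
    · rw [hUrow1 a (Sum.inl b), MW_ll]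
      simp only [Matrix.add_apply, A1mat, A2mat, A3mat, Matrix.of_apply]
      rw [zero_add, zero_add]
    · rw [hUrow1 a (Sum.inr w), MW_lr G v0 r c i j k l hc_inj hc_mem hc_surj a (hr_mem a) w]
      simp only [Matrix.add_apply, A1mat, A2mat, A3mat, Matrix.of_apply]
      rw [zero_add, add_zero]
  · -- row inr v
    rw [Matrix.mul_apply, Fintype.sum_sum_type]
    have h2 : ∀ v' : {v : V // v ≠ v0},
        Umat G v0 r k l (Sum.inr v) (Sum.inr v')
          * (Mmat G v0 r c * Wmat G v0 c i j) (Sum.inr v') q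
          = if v' = v then (Mmat G v0 r c * Wmat G v0 c i j) (Sum.inr v') q else 0 := by
      intro v'
      simp only [Umat, Matrix.fromBlocks_apply₂₂, Matrix.one_apply]
      by_cases h : v = v'
      · simp [h]
      · rw [if_neg h, if_neg (fun hh => h hh.symm), zero_mul]
    rw [Finset.sum_congr rfl (fun v' _ => h2 v'), Finset.sum_ite_eq' Finset.univ v]
    simp only [Finset.mem_univ, if_true]
    rcases q with b | w
    · -- (inr v, inl b)
      have h1 : ∀ a : Fin mm,
          Umat G v0 r k l (Sum.inr v) (Sum.inl a)
            * (Mmat G v0 r c * Wmat G v0 c i j) (Sum.inl a) (Sum.inl b)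
            = if r a = c b then
                (fun e => (if e ∈ ({k, l} : Finset E) then 0
                  else G.inc (FE E) e ↑v * (xF e)⁻¹) * xF e) (r a) else 0 := by
        intro a
        rw [MW_ll]
        simp only [Umat, Matrix.fromBlocks_apply₂₁, Matrix.of_apply]
        by_cases h : r a = c b
        · rw [if_pos h, if_pos h]
        · rw [if_neg h, if_neg h, mul_zero]
      rw [Finset.sum_congr rfl (fun a _ => h1 a),
        sum_ite_comp r ({i, j} : Finset E) hr_inj hr_mem hr_surj (c b)
          (fun e => (if e ∈ ({k, l} : Finset E) then 0
            else G.inc (FE E) e ↑v * (xF e)⁻¹) * xF e),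
        MW_rl]
      simp only [Matrix.add_apply, A1mat, A2mat, A3mat, Matrix.of_apply]
      by_cases h : c b ∈ ({i, j} : Finset E)
      · rw [if_pos h, if_pos h, zero_add, add_zero, add_zero]
      · rw [if_neg h, if_neg h, if_neg (hc_mem b), mul_assoc, inv_mul_cancel₀ (xF_ne_zero (c b)),
          mul_one, add_zero, add_zero, add_neg_cancel]
    · -- (inr v, inr w)
      have h1 : ∀ a : Fin mm,
          Umat G v0 r k l (Sum.inr v) (Sum.inl a)
            * (Mmat G v0 r c * Wmat G v0 c i j) (Sum.inl a) (Sum.inr w) = 0 := by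
        intro a
        rw [MW_lr G v0 r c i j k l hc_inj hc_mem hc_surj a (hr_mem a) w]
        simp only [Umat, Matrix.fromBlocks_apply₂₁, Matrix.of_apply]
        by_cases h : r a ∈ ({k, l} : Finset E)
        · rw [if_pos h, if_pos h, zero_mul]
        · rw [if_neg h, if_neg h, mul_zero]
      rw [Finset.sum_congr rfl (fun a _ => h1 a), Finset.sum_const_zero, zero_add, MW_rr]
      simp only [Matrix.add_apply, A1mat, A2mat, A3mat, Matrix.of_apply, add_zero]
      rw [← Finset.sum_add_distrib]
      refine Finset.sum_congr rfl fun b _ => ?_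
      by_cases h1 : c b ∈ E1
      · by_cases h2 : c b ∈ ({i, j} : Finset E)
        · rw [if_pos h2, if_neg (fun hh => hh.2 h2), if_neg (fun hh => hh h1), add_zero]
        · rw [if_neg h2, if_pos ⟨h1, h2⟩, if_neg (fun hh => hh h1), add_zero]
      · have h2 : c b ∉ ({i, j} : Finset E) := by
          intro hh
          rcases Finset.mem_insert.mp hh with h' | h'
          · exact h1 (h' ▸ hi)
          · exact h1 ((Finset.mem_singleton.mp h') ▸ hj)
        rw [if_neg h2, if_neg (fun hh => h1 hh.1), if_pos h1, zero_add]
  done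

end TwoVertexJoinUMW
section TwoVertexJoinRanks

set_option linter.unusedSectionVars false
set_option maxHeartbeats 1000000

open Matrix

variable {E V : Type*} [Fintype E] [LinearOrder E] [Fintype V] [DecidableEq V]

private lemma rank_A1_le (G : Multigraph E V) (v0 : V) {mm : ℕ} (c : Fin mm → E)
    (i j : E) (E1 : Finset E) (S1 : Finset V) (v1 : V) (hv1 : v1 ∈ S1)
    (hend1 : ∀ e ∈ E1, G.src e ∈ S1 ∧ G.tgt e ∈ S1) (hi : i ∈ E1) (hj : j ∈ E1) :
    (A1mat G v0 c i j E1).rank ≤ S1.card - 1 := by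
  classical
  set W1 : Submodule (FE E) (V → FE E) :=
    Submodule.span (FE E) ((fun e => fun v => G.inc (FE E) e v) '' (E1 : Set E)) with hW1
  set res := (LinearMap.funLeft (FE E) (FE E) (Subtype.val : {v : V // v ≠ v0} → V)) with hres
  refine le_trans (aux_rank_le_finrank _ ((W1.map res).map (sumElimL (FE E) (Fin mm))) ?_) ?_
  · rintro (b | w)
    · by_cases hb : c b ∈ ({i, j} : Finset E)
      · have hcbE1 : c b ∈ E1 := by
          rcases Finset.mem_insert.mp hb with h | h
          · exact h ▸ hi
          · exact (Finset.mem_singleton.mp h) ▸ hj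
        have heq : (fun p => A1mat G v0 c i j E1 p (Sum.inl b))
            = sumElimL (FE E) (Fin mm) (res (-(fun v => G.inc (FE E) (c b) v))) := by
          funext p
          rcases p with a | v
          · rfl
          · simp only [A1mat, Matrix.of_apply, if_pos hb, sumElimL, LinearMap.coe_mk,
              AddHom.coe_mk, Sum.elim_inr, hres, LinearMap.funLeft_apply, Pi.neg_apply]
        rw [heq]
        exact Submodule.mem_map_of_mem (Submodule.mem_map_of_mem
          (neg_mem (Submodule.subset_span ⟨c b, hcbE1, rfl⟩)))
      · have heq : (fun p => A1mat G v0 c i j E1 p (Sum.inl b)) = 0 := by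
          funext p
          rcases p with a | v
          · rfl
          · simp only [A1mat, Matrix.of_apply, if_neg hb, Pi.zero_apply]
        rw [heq]
        exact zero_mem _
    · have hgmem : (∑ b : Fin mm, (if c b ∈ E1 ∧ c b ∉ ({i, j} : Finset E) then
          (G.inc (FE E) (c b) ↑w * (xF (c b))⁻¹) • (fun v => G.inc (FE E) (c b) v)
          else 0)) ∈ W1 := by
        refine Submodule.sum_mem _ fun b _ => ?_
        by_cases hb : c b ∈ E1 ∧ c b ∉ ({i, j} : Finset E)
        · rw [if_pos hb]
          exact Submodule.smul_mem _ _ (Submodule.subset_span ⟨c b, hb.1, rfl⟩)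
        · rw [if_neg hb]; exact zero_mem _
      have heq : (fun p => A1mat G v0 c i j E1 p (Sum.inr w))
          = sumElimL (FE E) (Fin mm)
            (res (∑ b : Fin mm, (if c b ∈ E1 ∧ c b ∉ ({i, j} : Finset E) then
              (G.inc (FE E) (c b) ↑w * (xF (c b))⁻¹) • (fun v => G.inc (FE E) (c b) v)
              else 0))) := by
        funext p
        rcases p with a | v
        · rfl
        · simp only [A1mat, Matrix.of_apply, sumElimL, LinearMap.coe_mk, AddHom.coe_mk,
            Sum.elim_inr, hres, LinearMap.funLeft_apply, Finset.sum_apply]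
          refine Finset.sum_congr rfl fun b _ => ?_
          by_cases hb : c b ∈ E1 ∧ c b ∉ ({i, j} : Finset E)
          · rw [if_pos hb, if_pos hb, Pi.smul_apply, smul_eq_mul]
            ring
          · rw [if_neg hb, if_neg hb, Pi.zero_apply]
      rw [heq]
      exact Submodule.mem_map_of_mem (Submodule.mem_map_of_mem hgmem)
  · refine le_trans (Submodule.finrank_map_le _ _) ?_
    refine le_trans (Submodule.finrank_map_le _ _) ?_
    exact finrank_incSpan_le G S1 v1 hv1 _ (fun e he => hend1 e he)

private lemma rank_A2_le (G : Multigraph E V) (v0 : V) {mm : ℕ} (r c : Fin mm → E)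
    (k l : E) (E1 E2 : Finset E) (S2 : Finset V) (v1 : V) (hv1 : v1 ∈ S2)
    (hend2 : ∀ e ∈ E2, G.src e ∈ S2 ∧ G.tgt e ∈ S2) (hk : k ∈ E2) (hl : l ∈ E2)
    (hE2 : ∀ e, e ∉ E1 → e ∈ E2) :
    (A2mat G v0 r c k l E1).rank ≤ S2.card - 1 := by
  classical
  rw [← Matrix.rank_transpose]
  set W2 : Submodule (FE E) (V → FE E) :=
    Submodule.span (FE E) ((fun e => fun v => G.inc (FE E) e v) '' (E2 : Set E)) with hW2
  set res := (LinearMap.funLeft (FE E) (FE E) (Subtype.val : {v : V // v ≠ v0} → V)) with hres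
  refine le_trans (aux_rank_le_finrank _ ((W2.map res).map (sumElimL (FE E) (Fin mm))) ?_) ?_
  · rintro (a | v)
    · by_cases ha : r a ∈ ({k, l} : Finset E)
      · have hraE2 : r a ∈ E2 := by
          rcases Finset.mem_insert.mp ha with h | h
          · exact h ▸ hk
          · exact (Finset.mem_singleton.mp h) ▸ hl
        have heq : (fun p => (A2mat G v0 r c k l E1)ᵀ p (Sum.inl a))
            = sumElimL (FE E) (Fin mm) (res (fun v => G.inc (FE E) (r a) v)) := by
          funext p
          rcases p with b | w
          · rfl
          · simp only [Matrix.transpose_apply, A2mat, Matrix.of_apply, if_pos ha, sumElimL,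
              LinearMap.coe_mk, AddHom.coe_mk, Sum.elim_inr, hres, LinearMap.funLeft_apply]
        rw [heq]
        exact Submodule.mem_map_of_mem (Submodule.mem_map_of_mem
          (Submodule.subset_span ⟨r a, hraE2, rfl⟩))
      · have heq : (fun p => (A2mat G v0 r c k l E1)ᵀ p (Sum.inl a)) = 0 := by
          funext p
          rcases p with b | w
          · rfl
          · simp only [Matrix.transpose_apply, A2mat, Matrix.of_apply, if_neg ha, Pi.zero_apply]
        rw [heq]
        exact zero_mem _
    · have hgmem : (∑ b : Fin mm, (if c b ∉ E1 then
          (G.inc (FE E) (c b) ↑v * (xF (c b))⁻¹) • (fun u => G.inc (FE E) (c b) u)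
          else 0)) ∈ W2 := by
        refine Submodule.sum_mem _ fun b _ => ?_
        by_cases hb : c b ∉ E1
        · rw [if_pos hb]
          exact Submodule.smul_mem _ _ (Submodule.subset_span ⟨c b, hE2 _ hb, rfl⟩)
        · rw [if_neg hb]; exact zero_mem _
      have heq : (fun p => (A2mat G v0 r c k l E1)ᵀ p (Sum.inr v))
          = sumElimL (FE E) (Fin mm)
            (res (∑ b : Fin mm, (if c b ∉ E1 then
              (G.inc (FE E) (c b) ↑v * (xF (c b))⁻¹) • (fun u => G.inc (FE E) (c b) u)
              else 0))) := by
        funext p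
        rcases p with b | w
        · rfl
        · simp only [Matrix.transpose_apply, A2mat, Matrix.of_apply, sumElimL,
            LinearMap.coe_mk, AddHom.coe_mk, Sum.elim_inr, hres, LinearMap.funLeft_apply,
            Finset.sum_apply]
          refine Finset.sum_congr rfl fun b _ => ?_
          by_cases hb : c b ∉ E1
          · rw [if_pos hb, if_pos hb, Pi.smul_apply, smul_eq_mul]
            ring
          · rw [if_neg hb, if_neg hb, Pi.zero_apply]
      rw [heq]
      exact Submodule.mem_map_of_mem (Submodule.mem_map_of_mem hgmem)
  · refine le_trans (Submodule.finrank_map_le _ _) ?_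
    refine le_trans (Submodule.finrank_map_le _ _) ?_
    exact finrank_incSpan_le G S2 v1 hv1 _ (fun e he => hend2 e he)

private lemma rank_A3_le (G : Multigraph E V) (v0 : V) {mm : ℕ} (r c : Fin mm → E)
    (i j k l : E)
    (hr_inj : Function.Injective r) (hr_mem : ∀ a, r a ∉ ({i, j} : Finset E))
    (hr_surj : ∀ e ∉ ({i, j} : Finset E), ∃ a, r a = e)
    (hc_mem : ∀ b, c b ∉ ({k, l} : Finset E))
    (hkI : k ∉ ({i, j} : Finset E)) (hlI : l ∉ ({i, j} : Finset E)) (hkl : k ≠ l) :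
    (A3mat G v0 r c).rank ≤ mm - 2 := by
  classical
  obtain ⟨ak, hak⟩ := hr_surj k hkI
  obtain ⟨al, hal⟩ := hr_surj l hlI
  set T3 : Finset (Fin mm ⊕ {v : V // v ≠ v0} → FE E) :=
    (Finset.univ.filter (fun a => r a ∉ ({k, l} : Finset E))).image
      (fun a => Pi.single (Sum.inl a) (1 : FE E)) with hT3
  have hcols : ∀ q, (fun p => A3mat G v0 r c p q)
      ∈ Submodule.span (FE E) (T3 : Set (Fin mm ⊕ {v : V // v ≠ v0} → FE E)) := by
    rintro (b | w)
    · by_cases hcb : c b ∈ ({i, j} : Finset E)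
      · have heq : (fun p => A3mat G v0 r c p (Sum.inl b)) = 0 := by
          funext p
          rcases p with a | v
          · simp only [A3mat, Matrix.of_apply, Pi.zero_apply]
            exact if_neg (fun h => hr_mem a (by rw [h]; exact hcb))
          · rfl
        rw [heq]
        exact zero_mem _
      · obtain ⟨a₀, ha₀⟩ := hr_surj (c b) hcb
        have heq : (fun p => A3mat G v0 r c p (Sum.inl b))
            = xF (c b) • Pi.single (Sum.inl a₀) (1 : FE E) := by
          funext p
          rcases p with a | v
          · simp only [A3mat, Matrix.of_apply, Pi.smul_apply]
            by_cases h : a = a₀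
            · subst h
              rw [if_pos ha₀, Pi.single_eq_same, smul_eq_mul, mul_one, ha₀]
            · rw [if_neg (fun hh => h (hr_inj (hh.trans ha₀.symm))),
                Pi.single_eq_of_ne (fun hh => h (Sum.inl_injective hh)), smul_zero]
          · rw [Pi.smul_apply, Pi.single_eq_of_ne (by simp), smul_zero]
            rfl
        rw [heq]
        refine Submodule.smul_mem _ _ (Submodule.subset_span ?_)
        refine Finset.mem_coe.mpr (Finset.mem_image.mpr
          ⟨a₀, Finset.mem_filter.mpr ⟨Finset.mem_univ _, ?_⟩, rfl⟩)
        rw [ha₀]; exact hc_mem b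
    · have heq : (fun p => A3mat G v0 r c p (Sum.inr w)) = 0 := by
        funext p
        rcases p with a | v <;> rfl
      rw [heq]
      exact zero_mem _
  refine le_trans (aux_rank_le_finrank _ _ hcols) ?_
  refine le_trans (finrank_span_le_card (↑T3 : Set (Fin mm ⊕ {v : V // v ≠ v0} → FE E))) ?_
  rw [Finset.toFinset_coe]
  refine le_trans Finset.card_image_le ?_
  have hfil := Finset.card_filter_add_card_filter_not
    (s := (Finset.univ : Finset (Fin mm))) (p := fun a => r a ∈ ({k, l} : Finset E))
  have h2 : (Finset.univ.filter (fun a => r a ∈ ({k, l} : Finset E))) = {ak, al} := by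
    ext a
    simp only [Finset.mem_filter, Finset.mem_univ, true_and, Finset.mem_insert,
      Finset.mem_singleton]
    constructor
    · rintro (h | h)
      · left; exact hr_inj (h.trans hak.symm)
      · right; exact hr_inj (h.trans hal.symm)
    · rintro (rfl | rfl)
      · left; exact hak
      · right; exact hal
  have hak_ne : ak ≠ al := fun h => hkl (by rw [← hak, ← hal, h])
  rw [h2, Finset.card_pair hak_ne, Finset.card_univ, Fintype.card_fin] at hfil
  omega

end TwoVertexJoinRanks
section TwoVertexJoinFinal

set_option linter.unusedSectionVars false
set_option maxHeartbeats 1000000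

open Matrix

variable {E V : Type*} [Fintype E] [LinearOrder E] [Fintype V] [DecidableEq V]

private lemma main_det (G : Multigraph E V) (v0 : V)
    (S1 S2 : Finset V) (v1 v2 : V) (hv : v1 ≠ v2)
    (hcover : S1 ∪ S2 = Finset.univ) (hinter : S1 ∩ S2 = {v1, v2})
    (E1 E2 : Finset E) (hEcover : E1 ∪ E2 = Finset.univ) (hEdisj : Disjoint E1 E2)
    (hend1 : ∀ e ∈ E1, G.src e ∈ S1 ∧ G.tgt e ∈ S1)
    (hend2 : ∀ e ∈ E2, G.src e ∈ S2 ∧ G.tgt e ∈ S2)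
    (i j k l : E) (hi : i ∈ E1) (hj : j ∈ E1) (hk : k ∈ E2) (hl : l ∈ E2)
    (hij : i ≠ j) (hkl : k ≠ l)
    {mm : ℕ} (r c : Fin mm → E)
    (hr_inj : Function.Injective r) (hr_mem : ∀ a, r a ∉ ({i, j} : Finset E))
    (hr_surj : ∀ e ∉ ({i, j} : Finset E), ∃ a, r a = e)
    (hc_inj : Function.Injective c) (hc_mem : ∀ b, c b ∉ ({k, l} : Finset E))
    (hc_surj : ∀ e ∉ ({k, l} : Finset E), ∃ b, c b = e) :
    (Mmat G v0 r c).det = 0 := by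
  classical
  by_contra hdet
  have hnotE2 : ∀ e ∈ E1, e ∉ E2 := fun e he => Finset.disjoint_left.mp hEdisj he
  have hkI : k ∉ ({i, j} : Finset E) := by
    simp only [Finset.mem_insert, Finset.mem_singleton]
    push_neg
    exact ⟨fun h => hnotE2 i hi (h ▸ hk), fun h => hnotE2 j hj (h ▸ hk)⟩
  have hlI : l ∉ ({i, j} : Finset E) := by
    simp only [Finset.mem_insert, Finset.mem_singleton]
    push_neg
    exact ⟨fun h => hnotE2 i hi (h ▸ hl), fun h => hnotE2 j hj (h ▸ hl)⟩
  have hE2 : ∀ e, e ∉ E1 → e ∈ E2 := fun e he => by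
    have hm : e ∈ E1 ∪ E2 := hEcover ▸ Finset.mem_univ e
    rcases Finset.mem_union.mp hm with h | h
    · exact absurd h he
    · exact h
  have hv1i : v1 ∈ S1 ∩ S2 := by rw [hinter]; exact Finset.mem_insert_self _ _
  have hv1S1 : v1 ∈ S1 := (Finset.mem_inter.mp hv1i).1
  have hv1S2 : v1 ∈ S2 := (Finset.mem_inter.mp hv1i).2
  have hUdet : IsUnit (Umat G v0 r k l).det := by
    rw [Umat, Matrix.det_fromBlocks_zero₁₂]
    simp
  have hWdet : IsUnit (Wmat G v0 c i j).det := by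
    rw [Wmat, Matrix.det_fromBlocks_zero₂₁]
    simp
  have hrankM : (Mmat G v0 r c).rank = Fintype.card (Fin mm ⊕ {v : V // v ≠ v0}) :=
    Matrix.rank_of_isUnit _ ((Matrix.isUnit_iff_isUnit_det _).mpr (Ne.isUnit hdet))
  have hprod : (Umat G v0 r k l * (Mmat G v0 r c * Wmat G v0 c i j)).rank
      = (Mmat G v0 r c).rank := by
    rw [Matrix.rank_mul_eq_right_of_isUnit_det _ _ hUdet,
      Matrix.rank_mul_eq_left_of_isUnit_det _ _ hWdet]
  rw [UMW_eq G v0 r c i j k l E1 hr_inj hr_mem hr_surj hc_inj hc_mem hc_surj hi hj] at hprod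
  have hr1 := rank_A1_le G v0 c i j E1 S1 v1 hv1S1 hend1 hi hj
  have hr2 := rank_A2_le G v0 r c k l E1 E2 S2 v1 hv1S2 hend2 hk hl hE2
  have hr3 := rank_A3_le G v0 r c i j k l hr_inj hr_mem hr_surj hc_mem hkI hlI hkl
  have hadd : (A1mat G v0 c i j E1 + A2mat G v0 r c k l E1 + A3mat G v0 r c).rank
      ≤ (A1mat G v0 c i j E1).rank + (A2mat G v0 r c k l E1).rank + (A3mat G v0 r c).rank :=
    le_trans (aux_rank_add_le _ _) (add_le_add_left (aux_rank_add_le _ _) _)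
  have hcards : S1.card + S2.card = Fintype.card V + 2 := by
    have h := Finset.card_union_add_card_inter S1 S2
    rw [hcover, hinter, Finset.card_univ, Finset.card_pair hv] at h
    omega
  have hcardsub : Fintype.card {v : V // v ≠ v0} = Fintype.card V - 1 := by
    have h1 : Fintype.card {v : V // ¬ v = v0} = Fintype.card V - Fintype.card {v : V // v = v0} :=
      Fintype.card_subtype_compl _
    rw [Fintype.card_subtype_eq] at h1
    exact h1
  have hcardI : Fintype.card (Fin mm ⊕ {v : V // v ≠ v0}) = mm + (Fintype.card V - 1) := by
    rw [Fintype.card_sum, Fintype.card_fin, hcardsub]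
  have hVpos : 1 ≤ Fintype.card V := Fintype.card_pos_iff.mpr ⟨v0⟩
  have hS1pos : 1 ≤ S1.card := Finset.card_pos.mpr ⟨v1, hv1S1⟩
  have hS2pos : 1 ≤ S2.card := Finset.card_pos.mpr ⟨v1, hv1S2⟩
  have hmm2 : 2 ≤ mm := by
    obtain ⟨ak, hak⟩ := hr_surj k hkI
    obtain ⟨al, hal⟩ := hr_surj l hlI
    have hne : ak ≠ al := fun h => hkl (by rw [← hak, ← hal, h])
    calc 2 = ({ak, al} : Finset (Fin mm)).card := (Finset.card_pair hne).symm
      _ ≤ (Finset.univ : Finset (Fin mm)).card := Finset.card_le_card (Finset.subset_univ _)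
      _ = mm := by simp
  rw [hrankM, hcardI] at hprod
  omega

end TwoVertexJoinFinal

private lemma oif_inj {α : Type*} [LinearOrder α] (s : Finset α) {n : ℕ} (h : s.card = n) :
    Function.Injective (fun a : Fin n => ((s.orderIsoOfFin h a) : α)) :=
  fun a b hab => (s.orderIsoOfFin h).toEquiv.injective (Subtype.ext hab)

private lemma oif_mem {α : Type*} [LinearOrder α] (s : Finset α) {n : ℕ} (h : s.card = n)
    (a : Fin n) : ((s.orderIsoOfFin h a) : α) ∈ s := (s.orderIsoOfFin h a).2

private lemma oif_surj {α : Type*} [LinearOrder α] (s : Finset α) {n : ℕ} (h : s.card = n)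
    (e : α) (he : e ∈ s) : ∃ a : Fin n, ((s.orderIsoOfFin h a) : α) = e :=
  ⟨(s.orderIsoOfFin h).symm ⟨e, he⟩, by simp⟩


/-- If `G` is a two-vertex join of `G₁` (edges `E₁`, vertices `S₁`) and
`G₂` (edges `E₂`, vertices `S₂`, with `S₁ ∩ S₂ = {v₁, v₂}`), and the edges `i, j` lie in
`G₁` while `k, l` lie in `G₂`, then the Dodgson polynomial `Ψ^{ij,kl}_G` vanishes. -/
theorem two_vertex_join_dodgson_vanishes {E V : Type*} [Fintype E] [LinearOrder E]
    [Fintype V] [DecidableEq V] (G : Multigraph E V) (hconn : G.Connected) (v0 : V)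
    (S1 S2 : Finset V) (v1 v2 : V) (hv : v1 ≠ v2)
    (hcover : S1 ∪ S2 = Finset.univ) (hinter : S1 ∩ S2 = {v1, v2})
    (E1 E2 : Finset E) (hEcover : E1 ∪ E2 = Finset.univ) (hEdisj : Disjoint E1 E2)
    (hend1 : ∀ e ∈ E1, G.src e ∈ S1 ∧ G.tgt e ∈ S1)
    (hend2 : ∀ e ∈ E2, G.src e ∈ S2 ∧ G.tgt e ∈ S2)
    (i j k l : E) (hi : i ∈ E1) (hj : j ∈ E1) (hk : k ∈ E2) (hl : l ∈ E2)
    (hij : i ≠ j) (hkl : k ≠ l) :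
    G.dodgson v0 {i, j} {k, l} ∅ = 0 := by
    classical
  have hIJ : ({i, j} : Finset E).card = ({k, l} : Finset E).card := by
    rw [Finset.card_pair hij, Finset.card_pair hkl]
  rw [Multigraph.dodgson, dif_pos hIJ]
  apply IsFractionRing.injective (MvPolynomial E ℚ) (FractionRing (MvPolynomial E ℚ))
  rw [map_zero, RingHom.map_det]
  refine main_det G v0 S1 S2 v1 v2 hv hcover hinter E1 E2 hEcover hEdisj hend1 hend2
    i j k l hi hj hk hl hij hkl _ _ ?_ ?_ ?_ ?_ ?_ ?_
  · exact oif_inj _ _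
  · intro a
    exact Finset.mem_compl.mp (oif_mem _ _ a)
  · intro e he
    exact oif_surj _ _ e (Finset.mem_compl.mpr he)
  · exact oif_inj _ _
  · intro b
    exact Finset.mem_compl.mp (oif_mem _ _ b)
  · intro e he
    exact oif_surj _ _ e (Finset.mem_compl.mpr he)
end

section
/- The Plücker-type identity for Dodgson polynomials: for any four distinct edges i, j, k, l of a connected graph G, with consistent sign choices, Ψ^{ij,kl}_G - Ψ^{ik,jl}_G + Ψ^{il,jk}_G = 0. -/
set_option linter.unusedSectionVars false
set_option maxHeartbeats 1000000


open Matrix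

section AuxGeneric

variable {ι : Type*} [Fintype ι] [DecidableEq ι] {R : Type*} [CommRing R]

lemma perm_eq_one_or_swap (σ : Equiv.Perm ι) (a b : ι) (hab : a ≠ b)
    (H : ∀ i, σ i ≠ a → σ i ≠ b → σ i = i) : σ = 1 ∨ σ = Equiv.swap a b := by
  have hfix : ∀ i, i ≠ a → i ≠ b → σ i = i := by
    intro i hia hib
    apply H
    · intro h1
      have hsa : σ a ≠ a := by
        intro h
        exact hia (σ.injective (h.trans h1.symm)).symm
      have hsab : σ a = b := by
        by_contra h
        exact hsa (H a hsa h)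
      have hsb : σ b ≠ b := by
        intro h
        exact hab.symm (σ.injective (h.trans hsab.symm))
      have hsba : σ b ≠ a := by
        intro h
        exact hib (σ.injective (h.trans h1.symm)).symm
      exact hsb (H b hsba hsb)
    · intro h1
      have hsb : σ b ≠ b := by
        intro h
        exact hib (σ.injective (h.trans h1.symm)).symm
      have hsba : σ b = a := by
        by_contra h
        exact hsb (H b h hsb)
      have hsa : σ a ≠ a := by
        intro h
        exact hab (σ.injective (h.trans hsba.symm))
      have hsab : σ a ≠ b := by
        intro h
        exact hia (σ.injective (h.trans h1.symm)).symm
      exact hsa (H a hsa hsab)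
  by_cases hsa : σ a = a
  · left
    have hsb : σ b = b := by
      rcases eq_or_ne (σ b) a with h | h
      · exact absurd (σ.injective (h.trans hsa.symm)) hab.symm
      · rcases eq_or_ne (σ b) b with h' | h'
        · exact h'
        · exact absurd (H b h h') h'
    ext i
    rcases eq_or_ne i a with rfl | hia
    · simpa using hsa
    rcases eq_or_ne i b with rfl | hib
    · simpa using hsb
    · simpa using hfix i hia hib
  · right
    have hsab : σ a = b := by
      by_contra h
      exact hsa (H a hsa h)
    have hsba : σ b = a := by
      rcases eq_or_ne (σ b) a with h | h
      · exact h
      · rcases eq_or_ne (σ b) b with h' | h'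
        · exact absurd (σ.injective (hsab.trans h'.symm)) hab
        · exact absurd (H b h h') h'
    ext i
    rcases eq_or_ne i a with rfl | hia
    · simp [hsab, Equiv.swap_apply_left]
    rcases eq_or_ne i b with rfl | hib
    · simp [hsba, Equiv.swap_apply_right]
    · simp [hfix i hia hib, Equiv.swap_apply_of_ne_of_ne hia hib]

lemma det_updateRow_two (t : R) {a b : ι} (hab : a ≠ b) (u v : ι → R) :
    (((t • (1 : Matrix ι ι R)).updateRow a u).updateRow b v).det
      = t ^ (Fintype.card ι - 2) * (u a * v b - u b * v a) := by
  set D := ((t • (1 : Matrix ι ι R)).updateRow a u).updateRow b v with hD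
  have hDa : ∀ x, D a x = u x := by
    intro x
    rw [hD, Matrix.updateRow_ne hab, Matrix.updateRow_self]
  have hDb : ∀ x, D b x = v x := by
    intro x
    rw [hD, Matrix.updateRow_self]
  have hDo : ∀ r x, r ≠ a → r ≠ b → D r x = t * (if r = x then 1 else 0) := by
    intro r x hra hrb
    rw [hD, Matrix.updateRow_ne hrb, Matrix.updateRow_ne hra]
    simp [Matrix.one_apply]
  rw [Matrix.det_apply']
  have hvanish : ∀ σ ∈ (Finset.univ : Finset (Equiv.Perm ι)),
      σ ∉ ({1, Equiv.swap a b} : Finset (Equiv.Perm ι)) →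
      (Equiv.Perm.sign σ : ℤ) * ∏ i, D (σ i) i = 0 := by
    intro σ _ hσ
    simp only [Finset.mem_insert, Finset.mem_singleton] at hσ
    push_neg at hσ
    have : ¬ (∀ i, σ i ≠ a → σ i ≠ b → σ i = i) := by
      intro H
      rcases perm_eq_one_or_swap σ a b hab H with h | h
      · exact hσ.1 h
      · exact hσ.2 h
    push_neg at this
    obtain ⟨i, hia, hib, hii⟩ := this
    have : D (σ i) i = 0 := by
      rw [hDo _ _ hia hib, if_neg hii, mul_zero]
    exact mul_eq_zero_of_right _ (Finset.prod_eq_zero (Finset.mem_univ i) this)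
  rw [← Finset.sum_subset (Finset.subset_univ ({1, Equiv.swap a b} : Finset (Equiv.Perm ι)))
    (fun σ h1 h2 => hvanish σ h1 h2)]
  have hone_ne : (1 : Equiv.Perm ι) ≠ Equiv.swap a b := by
    intro h
    exact hab (Equiv.swap_eq_one_iff.mp h.symm)
  rw [Finset.sum_pair hone_ne]
  have hbmem : b ∈ Finset.univ.erase a := Finset.mem_erase.mpr ⟨hab.symm, Finset.mem_univ b⟩
  have hcard : ((Finset.univ.erase a).erase b).card = Fintype.card ι - 2 := by
    rw [Finset.card_erase_of_mem hbmem, Finset.card_erase_of_mem (Finset.mem_univ a)]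
    rw [Finset.card_univ]
    omega
  have hprod_t : ∀ (f : ι → R), (∀ r, r ≠ a → r ≠ b → f r = t) → f a = f a →
      ∏ i, f i = f a * f b * t ^ (Fintype.card ι - 2) := by
    intro f hf _
    rw [← Finset.mul_prod_erase _ _ (Finset.mem_univ a), ← Finset.mul_prod_erase _ _ hbmem,
      ← mul_assoc]
    congr 1
    rw [← hcard]
    rw [Finset.prod_congr rfl (fun r hr => by
      simp only [Finset.mem_erase] at hr
      exact hf r hr.2.1 hr.1)]
    exact Finset.prod_const t
  have h1 : ∏ i, D ((1 : Equiv.Perm ι) i) i = u a * v b * t ^ (Fintype.card ι - 2) := by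
    have := hprod_t (fun i => D i i) (fun r hra hrb => by
      show D r r = t
      rw [hDo r r hra hrb, if_pos rfl, mul_one]) rfl
    simpa [hDa, hDb] using this
  have h2 : ∏ i, D (Equiv.swap a b i) i = v a * u b * t ^ (Fintype.card ι - 2) := by
    have := hprod_t (fun i => D (Equiv.swap a b i) i) (fun r hra hrb => by
      show D (Equiv.swap a b r) r = t
      rw [Equiv.swap_apply_of_ne_of_ne hra hrb, hDo r r hra hrb, if_pos rfl, mul_one]) rfl
    simpa [Equiv.swap_apply_left, Equiv.swap_apply_right, hDa, hDb] using this
  rw [h1, h2, Equiv.Perm.sign_one, Equiv.Perm.sign_swap hab]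
  push_cast
  ring

lemma updateRow_mul' (A C : Matrix ι ι R) (r : ι) (w : ι → R) :
    (A.updateRow r w) * C = (A * C).updateRow r (w ᵥ* C) := by
  ext i j
  by_cases h : i = r
  · subst h
    simp [Matrix.mul_apply, Matrix.vecMul, dotProduct]
  · simp [Matrix.mul_apply, Matrix.updateRow_ne h]

lemma single_vecMul' (c : ι) (C : Matrix ι ι R) : (Pi.single c (1 : R)) ᵥ* C = C c := by
  ext j
  simp [Matrix.vecMul, dotProduct, Pi.single_apply, ite_mul]

lemma desnanot (A : Matrix ι ι R) (a b c d : ι) (hab : a ≠ b) :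
    A.det ^ (Fintype.card ι - 1) *
      ((A.updateRow a (Pi.single c 1)).updateRow b (Pi.single d 1)).det
    = A.det ^ (Fintype.card ι - 2) *
      (A.adjugate c a * A.adjugate d b - A.adjugate c b * A.adjugate d a) := by
  set B := (A.updateRow a (Pi.single c 1)).updateRow b (Pi.single d 1) with hB
  have hBA : B * A.adjugate
      = ((A.det • (1 : Matrix ι ι R)).updateRow a (A.adjugate c)).updateRow b (A.adjugate d) := by
    rw [hB, updateRow_mul', updateRow_mul', Matrix.mul_adjugate, single_vecMul', single_vecMul']
  have h1 : (B * A.adjugate).det = B.det * A.det ^ (Fintype.card ι - 1) := by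
    rw [Matrix.det_mul, Matrix.det_adjugate]
  have h2 : (B * A.adjugate).det = A.det ^ (Fintype.card ι - 2) *
      (A.adjugate c a * A.adjugate d b - A.adjugate c b * A.adjugate d a) := by
    rw [hBA, det_updateRow_two _ hab]
  rw [← h2, h1]
  ring

end AuxGeneric

open Matrix

set_option linter.unusedSectionVars false

lemma canon_generic {ι κ : Type*} [Fintype ι] [DecidableEq ι] [Fintype κ] [DecidableEq κ]
    {R : Type*} [CommRing R] (A : Matrix ι ι R) (a b c d : ι) (hab : a ≠ b) (hcd : c ≠ d)
    (ρ γ : κ → ι) (hρ : Function.Injective ρ) (hγ : Function.Injective γ)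
    (hρr : ∀ x, x ∈ Set.range ρ ↔ (x ≠ a ∧ x ≠ b))
    (hγr : ∀ x, x ∈ Set.range γ ↔ (x ≠ c ∧ x ≠ d)) :
    ∃ u : ℤˣ, (A.submatrix ρ γ).det
      = ((u : ℤ) : R) * ((A.updateRow a (Pi.single c 1)).updateRow b (Pi.single d 1)).det := by
  classical
  set B := (A.updateRow a (Pi.single c 1)).updateRow b (Pi.single d 1) with hBdef
  have mkEquiv : ∀ (f : κ → ι) (x y : ι), x ≠ y → Function.Injective f →
      (∀ z, z ∈ Set.range f ↔ (z ≠ x ∧ z ≠ y)) →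
      ∃ e : (κ ⊕ Fin 2) ≃ ι, (∀ p, e (Sum.inl p) = f p) ∧
        (∀ t, e (Sum.inr t) = if t = 0 then x else y) := by
    intro f x y hxy hinj hr
    have hfx : ∀ p, f p ≠ x := fun p => ((hr (f p)).mp ⟨p, rfl⟩).1
    have hfy : ∀ p, f p ≠ y := fun p => ((hr (f p)).mp ⟨p, rfl⟩).2
    let g : (κ ⊕ Fin 2) → ι := Sum.elim f (fun t => if t = 0 then x else y)
    have hginj : Function.Injective g := by
      intro p q h
      match p, q with
      | Sum.inl p, Sum.inl q => exact congrArg Sum.inl (hinj h)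
      | Sum.inl p, Sum.inr t =>
        exfalso; by_cases ht : t = 0
        · exact hfx p (by simpa [g, ht] using h)
        · exact hfy p (by simpa [g, ht] using h)
      | Sum.inr t, Sum.inl q =>
        exfalso; by_cases ht : t = 0
        · exact hfx q (by simpa [g, ht] using h.symm)
        · exact hfy q (by simpa [g, ht] using h.symm)
      | Sum.inr t, Sum.inr s =>
        have h' : (if t = 0 then x else y) = (if s = 0 then x else y) := h
        congr
        by_cases ht : t = 0 <;> by_cases hs : s = 0
        · omega
        · rw [if_pos ht, if_neg hs] at h'; exact absurd h' hxy
        · rw [if_neg ht, if_pos hs] at h'; exact absurd h'.symm hxy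
        · omega
    have hgsurj : Function.Surjective g := by
      intro z
      by_cases hzx : z = x
      · exact ⟨Sum.inr 0, by simp [g, hzx]⟩
      by_cases hzy : z = y
      · exact ⟨Sum.inr 1, by simp [g, hzy]⟩
      · obtain ⟨p, hp⟩ := (hr z).mpr ⟨hzx, hzy⟩
        exact ⟨Sum.inl p, hp⟩
    exact ⟨Equiv.ofBijective g ⟨hginj, hgsurj⟩, fun p => rfl, fun t => rfl⟩
  obtain ⟨eρ, heρ1, heρ2⟩ := mkEquiv ρ a b hab hρ hρr
  obtain ⟨eγ, heγ1, heγ2⟩ := mkEquiv γ c d hcd hγ hγr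
  set π : Equiv.Perm (κ ⊕ Fin 2) := eρ.trans eγ.symm with hπ
  have hsub : B.submatrix (⇑eρ) (⇑eγ) = (B.submatrix (⇑eγ) (⇑eγ)).submatrix (⇑π) id := by
    ext p q
    simp [Matrix.submatrix_apply, hπ]
  have hdet1 : (B.submatrix (⇑eρ) (⇑eγ)).det = ((Equiv.Perm.sign π : ℤ) : R) * B.det := by
    rw [hsub, Matrix.det_permute, Matrix.det_submatrix_equiv_self]
  have hρa : ∀ p, ρ p ≠ a := fun p => ((hρr (ρ p)).mp ⟨p, rfl⟩).1
  have hρb : ∀ p, ρ p ≠ b := fun p => ((hρr (ρ p)).mp ⟨p, rfl⟩).2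
  have hγc : ∀ p, γ p ≠ c := fun p => ((hγr (γ p)).mp ⟨p, rfl⟩).1
  have hγd : ∀ p, γ p ≠ d := fun p => ((hγr (γ p)).mp ⟨p, rfl⟩).2
  have hblock : B.submatrix (⇑eρ) (⇑eγ)
      = Matrix.fromBlocks (A.submatrix ρ γ)
          (Matrix.of fun p q => B (ρ p) (eγ (Sum.inr q))) 0 (1 : Matrix (Fin 2) (Fin 2) R) := by
    ext p q
    match p, q with
    | Sum.inl p, Sum.inl q =>
      show B (eρ (Sum.inl p)) (eγ (Sum.inl q)) = A (ρ p) (γ q)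
      rw [heρ1, heγ1, hBdef, Matrix.updateRow_ne (hρb p), Matrix.updateRow_ne (hρa p)]
    | Sum.inl p, Sum.inr q =>
      show B (eρ (Sum.inl p)) (eγ (Sum.inr q)) = B (ρ p) (eγ (Sum.inr q))
      rw [heρ1]
    | Sum.inr t, Sum.inl q =>
      show B (eρ (Sum.inr t)) (eγ (Sum.inl q)) = 0
      rw [heγ1, heρ2]
      by_cases ht : t = 0
      · rw [if_pos ht, hBdef, Matrix.updateRow_ne hab, Matrix.updateRow_self]
        exact Pi.single_eq_of_ne (hγc q) 1
      · rw [if_neg ht, hBdef, Matrix.updateRow_self]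
        exact Pi.single_eq_of_ne (hγd q) 1
    | Sum.inr t, Sum.inr s =>
      show B (eρ (Sum.inr t)) (eγ (Sum.inr s)) = (1 : Matrix (Fin 2) (Fin 2) R) t s
      rw [heρ2, heγ2]
      have hts : (t = s) ∨ t ≠ s := eq_or_ne t s
      by_cases ht : t = 0 <;> by_cases hs : s = 0
      · rw [if_pos ht, if_pos hs, hBdef, Matrix.updateRow_ne hab, Matrix.updateRow_self,
          Pi.single_eq_same, ht, hs, Matrix.one_apply_eq]
      · rw [if_pos ht, if_neg hs, hBdef, Matrix.updateRow_ne hab, Matrix.updateRow_self,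
          Pi.single_eq_of_ne (Ne.symm hcd), Matrix.one_apply_ne (by rw [ht]; exact fun h => hs h.symm)]
      · rw [if_neg ht, if_pos hs, hBdef, Matrix.updateRow_self,
          Pi.single_eq_of_ne hcd, Matrix.one_apply_ne (by rw [hs]; exact ht)]
      · have hts : t = s := by omega
        rw [if_neg ht, if_neg hs, hBdef, Matrix.updateRow_self, Pi.single_eq_same, hts,
          Matrix.one_apply_eq]
  have hdet2 : (B.submatrix (⇑eρ) (⇑eγ)).det = (A.submatrix ρ γ).det := by
    rw [hblock, Matrix.det_fromBlocks_zero₂₁, Matrix.det_one, mul_one]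
  refine ⟨Equiv.Perm.sign π, ?_⟩
  rw [← hdet1, hdet2]


section PluckerSpecificAux

open Matrix

variable {E W : Type*} [Fintype E] [DecidableEq E] [Fintype W] [DecidableEq W]
variable {R : Type*} [CommRing R]

/-- Adjugate of a "diagonal plus skew-bordered" matrix is symmetric in the
diagonal-block entries. -/
lemma adjugate_symm_inl (x : E → R) (N : Matrix E W R) (a b : E) :
    (Matrix.fromBlocks (Matrix.diagonal x) N (-Nᵀ) 0).adjugate (Sum.inl a) (Sum.inl b)
      = (Matrix.fromBlocks (Matrix.diagonal x) N (-Nᵀ) 0).adjugate (Sum.inl b) (Sum.inl a) := by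
  set M := Matrix.fromBlocks (Matrix.diagonal x) N (-Nᵀ) (0 : Matrix W W R) with hM
  set d : E ⊕ W → R := Sum.elim (fun _ => 1) (fun _ => -1) with hd
  have hJMJ : Mᵀ = (Matrix.diagonal d) * M * (Matrix.diagonal d) := by
    ext p q
    rw [Matrix.mul_diagonal, Matrix.diagonal_mul, Matrix.transpose_apply]
    match p, q with
    | Sum.inl e, Sum.inl e' =>
      show M (Sum.inl e') (Sum.inl e) = d (Sum.inl e) * M (Sum.inl e) (Sum.inl e') * d (Sum.inl e')
      show Matrix.diagonal x e' e = d (Sum.inl e) * Matrix.diagonal x e e' * d (Sum.inl e')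
      have h1 : d (Sum.inl e) = 1 := rfl
      have h2 : d (Sum.inl e') = 1 := rfl
      rw [h1, h2, one_mul, mul_one]
      rcases eq_or_ne e e' with rfl | h
      · rfl
      · rw [Matrix.diagonal_apply_ne _ (Ne.symm h), Matrix.diagonal_apply_ne _ h]
    | Sum.inl e, Sum.inr w =>
      show M (Sum.inr w) (Sum.inl e) = d (Sum.inl e) * M (Sum.inl e) (Sum.inr w) * d (Sum.inr w)
      show (-Nᵀ) w e = d (Sum.inl e) * N e w * d (Sum.inr w)
      rw [hd]
      simp [Matrix.transpose_apply]
    | Sum.inr w, Sum.inl e =>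
      show M (Sum.inl e) (Sum.inr w) = d (Sum.inr w) * M (Sum.inr w) (Sum.inl e) * d (Sum.inl e)
      show N e w = d (Sum.inr w) * (-Nᵀ) w e * d (Sum.inl e)
      rw [hd]
      simp [Matrix.transpose_apply]
    | Sum.inr w, Sum.inr w' =>
      show M (Sum.inr w') (Sum.inr w) = d (Sum.inr w) * M (Sum.inr w) (Sum.inr w') * d (Sum.inr w')
      show (0 : Matrix W W R) w' w = d (Sum.inr w) * (0 : Matrix W W R) w w' * d (Sum.inr w')
      simp
  have hadj : Mᵀ.adjugate = (Matrix.diagonal d).adjugate * M.adjugate * (Matrix.diagonal d).adjugate := by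
    rw [hJMJ, Matrix.adjugate_mul_distrib, Matrix.adjugate_mul_distrib]
    noncomm_ring
  have hadjd : (Matrix.diagonal d).adjugate = Matrix.diagonal
      (fun i => ∏ j ∈ Finset.univ.erase i, d j) := Matrix.adjugate_diagonal d
  have hg : ∀ e : E, (∏ j ∈ Finset.univ.erase (Sum.inl e : E ⊕ W), d j) = ∏ j, d j := by
    intro e
    have := Finset.prod_erase_mul Finset.univ d (Finset.mem_univ (Sum.inl e : E ⊕ W))
    rw [← this, hd]
    simp
  have hPP : (∏ j, d j) * (∏ j, d j) = 1 := by
    rw [← Finset.prod_mul_distrib]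
    rw [Finset.prod_congr rfl (fun j _ => ?_), Finset.prod_const_one]
    match j with
    | Sum.inl e => show d (Sum.inl e) * d (Sum.inl e) = 1; rw [hd]; simp
    | Sum.inr w => show d (Sum.inr w) * d (Sum.inr w) = 1; rw [hd]; simp
  have h1 : M.adjugate (Sum.inl b) (Sum.inl a) = Mᵀ.adjugate (Sum.inl a) (Sum.inl b) := by
    rw [← Matrix.adjugate_transpose, Matrix.transpose_apply]
  rw [h1, hadj, hadjd, Matrix.mul_diagonal, Matrix.diagonal_mul, hg, hg]
  linear_combination (-(M.adjugate (Sum.inl a) (Sum.inl b))) * hPP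


end PluckerSpecificAux


section PluckerGraphAux

open Matrix

variable {E V : Type*} [Fintype E] [LinearOrder E] [Fintype V] [DecidableEq V]

lemma plucker_map_inc (G : Multigraph E V) {R S : Type*} [Ring R] [Ring S] (f : R →+* S)
    (e : E) (v : V) : f (G.inc R e v) = G.inc S e v := by
  unfold Multigraph.inc
  rw [map_sub, apply_ite f, apply_ite f, _root_.map_one, _root_.map_zero]

lemma bigMatK_empty_eq (G : Multigraph E V) (v0 : V) :
    G.bigMatK v0 (∅ : Finset E) = Matrix.fromBlocks
      (Matrix.diagonal fun e => MvPolynomial.X e)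
      (Matrix.of fun e (w : {v : V // v ≠ v0}) => G.inc (MvPolynomial E ℚ) e ↑w)
      (-(Matrix.of fun e (w : {v : V // v ≠ v0}) => G.inc (MvPolynomial E ℚ) e ↑w)ᵀ) 0 := by
  unfold Multigraph.bigMatK
  funext p q
  match p, q with
  | Sum.inl e, Sum.inl e' =>
    show (Matrix.diagonal fun e => if e ∈ (∅ : Finset E) then (0 : MvPolynomial E ℚ)
      else MvPolynomial.X e) e e' = (Matrix.diagonal fun e => MvPolynomial.X e) e e'
    simp [Matrix.diagonal_apply]
  | Sum.inl e, Sum.inr w => rfl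
  | Sum.inr w, Sum.inl e => rfl
  | Sum.inr w, Sum.inr w' => rfl

lemma bigMat_adjugate_symm (G : Multigraph E V) (v0 : V) (a b : E) :
    (G.bigMatK v0 ∅).adjugate (Sum.inl a) (Sum.inl b)
      = (G.bigMatK v0 ∅).adjugate (Sum.inl b) (Sum.inl a) := by
  rw [bigMatK_empty_eq]
  exact adjugate_symm_inl _ _ a b

lemma det_bigMat_ne_zero (G : Multigraph E V) (hconn : G.Connected) (v0 : V) :
    (G.bigMatK v0 ∅).det ≠ 0 := by
  classical
  set W := {v : V // v ≠ v0}
  set P : Matrix E W ℚ := Matrix.of (fun e (w : W) => G.inc ℚ e ↑w) with hP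
  have hPker : ∀ v : W → ℚ, P *ᵥ v = 0 → v = 0 := by
    intro v hv
    set F : V → ℚ := fun x => if h : x = v0 then 0 else v ⟨x, h⟩ with hF
    have hsum : ∀ x : V, (∑ w : W, (if x = ↑w then (1:ℚ) else 0) * v w) = F x := by
      intro x
      show (∑ w : W, (if x = ↑w then (1:ℚ) else 0) * v w) = if h : x = v0 then 0 else v ⟨x, h⟩
      by_cases hx : x = v0
      · rw [dif_pos hx, Finset.sum_eq_zero]
        intro w _
        rw [if_neg, zero_mul]
        intro h
        exact w.2 (h.symm.trans hx)
      · rw [dif_neg hx, Finset.sum_eq_single (⟨x, hx⟩ : W)]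
        · rw [if_pos rfl, one_mul]
        · intro w _ hw
          rw [if_neg, zero_mul]
          intro h
          exact hw (Subtype.ext h.symm)
        · intro h
          exact absurd (Finset.mem_univ _) h
    have hedge : ∀ e : E, F (G.src e) = F (G.tgt e) := by
      intro e
      have h0 : (P *ᵥ v) e = 0 := by rw [hv]; rfl
      have h1 : (∑ w : W, (if G.src e = ↑w then (1:ℚ) else 0) * v w)
          - (∑ w : W, (if G.tgt e = ↑w then (1:ℚ) else 0) * v w) = 0 := by
        rw [← Finset.sum_sub_distrib]
        have h2 : (∑ w : W, ((if G.src e = ↑w then (1:ℚ) else 0) * v w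
            - (if G.tgt e = ↑w then (1:ℚ) else 0) * v w)) = ∑ w : W, P e w * v w := by
          apply Finset.sum_congr rfl
          intro w _
          show _ = ((if G.src e = ↑w then (1:ℚ) else 0) - (if G.tgt e = ↑w then (1:ℚ) else 0)) * v w
          ring
        rw [h2]
        exact h0
      rw [hsum, hsum] at h1
      linarith
    have hreach : ∀ x y : V, G.Reach Finset.univ x y → F x = F y := by
      intro x y h
      have h' : Relation.ReflTransGen (G.Adj Finset.univ) x y := h
      induction h' with
      | refl => rfl
      | tail h1 h2 ih =>
        obtain ⟨e, _, hcase⟩ := h2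
        rcases hcase with ⟨h3, h4⟩ | ⟨h3, h4⟩
        · rw [ih h1, ← h3, ← h4]
          exact hedge e
        · rw [ih h1, ← h3, ← h4]
          exact (hedge e).symm
    funext w
    have h2 : F ↑w = F v0 := hreach _ _ (hconn ↑w v0)
    have h3 : F v0 = 0 := dif_pos rfl
    have h4 : F ↑w = v w := by
      show (if h : (↑w : V) = v0 then (0:ℚ) else v ⟨↑w, h⟩) = v w
      rw [dif_neg w.2]
    show v w = (0 : W → ℚ) w
    rw [Pi.zero_apply, ← h4, h2, h3]
  have hPTP : (Pᵀ * P).det ≠ 0 := by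
    intro h0
    obtain ⟨v, hv0, hvz⟩ := Matrix.exists_mulVec_eq_zero_iff.mpr h0
    apply hv0
    apply hPker
    have h1 : v ⬝ᵥ ((Pᵀ * P) *ᵥ v) = 0 := by rw [hvz, dotProduct_zero]
    rw [← Matrix.mulVec_mulVec, Matrix.dotProduct_mulVec, Matrix.vecMul_transpose] at h1
    exact dotProduct_self_eq_zero.mp h1
  set φ := (MvPolynomial.eval (fun _ : E => (1:ℚ))) with hφ
  have hmap : (G.bigMatK v0 ∅).map φ = Matrix.fromBlocks (1 : Matrix E E ℚ) P (-Pᵀ) 0 := by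
    ext p q
    match p, q with
    | Sum.inl e, Sum.inl e' =>
      show φ ((Matrix.diagonal fun e => if e ∈ (∅ : Finset E) then (0 : MvPolynomial E ℚ)
        else MvPolynomial.X e) e e') = (1 : Matrix E E ℚ) e e'
      rw [Matrix.diagonal_apply, Matrix.one_apply, apply_ite φ]
      simp [hφ]
    | Sum.inl e, Sum.inr w =>
      show φ (G.inc _ e ↑w) = P e w
      rw [plucker_map_inc]
      rfl
    | Sum.inr w, Sum.inl e =>
      show φ (-(G.inc _ e ↑w)) = (-Pᵀ) w e
      rw [map_neg, plucker_map_inc]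
      rfl
    | Sum.inr w, Sum.inr w' =>
      show φ (0 : MvPolynomial E ℚ) = (0 : Matrix W W ℚ) w w'
      rw [map_zero]
      rfl
  have hblockdet : (Matrix.fromBlocks (1 : Matrix E E ℚ) P (-Pᵀ) 0).det = (Pᵀ * P).det := by
    letI : Invertible (1 : Matrix E E ℚ) := invertibleOne
    rw [Matrix.det_fromBlocks₁₁]
    simp [Matrix.neg_mul, sub_neg_eq_add]
  intro h
  apply hPTP
  rw [← hblockdet, ← hmap]
  have h5 : φ (G.bigMatK v0 ∅).det = ((G.bigMatK v0 ∅).map φ).det := by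
    rw [RingHom.map_det]
    rfl
  rw [← h5, h, map_zero]

lemma sum_map_orderIso_range {W : Type*} (S : Finset E) {k : ℕ} (h : S.card = k) :
    Function.Injective
        (Sum.map (fun i : Fin k => ((S.orderIsoOfFin h) i : E)) (id : W → W)) ∧
      ∀ p : E ⊕ W,
        p ∈ Set.range (Sum.map (fun i : Fin k => ((S.orderIsoOfFin h) i : E)) (id : W → W))
          ↔ ∀ e : E, p = Sum.inl e → e ∈ S := by
  constructor
  · apply Function.Injective.sumMap _ Function.injective_id
    intro i i' hii
    exact (S.orderIsoOfFin h).injective (Subtype.coe_injective hii)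
  · intro p
    constructor
    · rintro ⟨q, rfl⟩ e he
      match q with
      | Sum.inl i =>
        have h2 := Sum.inl.inj he
        rw [← h2]
        exact Finset.coe_mem _
      | Sum.inr w => simp at he
    · intro hp
      match p with
      | Sum.inl e =>
        have he : e ∈ S := hp e rfl
        exact ⟨Sum.inl ((S.orderIsoOfFin h).symm ⟨e, he⟩), by
          show Sum.inl (((S.orderIsoOfFin h) ((S.orderIsoOfFin h).symm ⟨e, he⟩) : E)) = Sum.inl e
          rw [OrderIso.apply_symm_apply]⟩
      | Sum.inr w => exact ⟨Sum.inr w, rfl⟩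

lemma canon_dodgson (G : Multigraph E V) (v0 : V) (a b c d : E) (hab : a ≠ b) (hcd : c ≠ d)
    (hac : a ≠ c) (had : a ≠ d) (hbc : b ≠ c) (hbd : b ≠ d) :
    ∃ s : ℚ, (s = 1 ∨ s = -1) ∧
      G.dodgson v0 {a, b} {c, d} ∅ =
        s • (((G.bigMatK v0 ∅).updateRow (Sum.inl a) (Pi.single (Sum.inl c) 1)).updateRow
          (Sum.inl b) (Pi.single (Sum.inl d) 1)).det := by
  classical
  set W := {v : V // v ≠ v0}
  have hcc : ({a, b} : Finset E).card = ({c, d} : Finset E).card := by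
    rw [Finset.card_pair hab, Finset.card_pair hcd]
  have hcompl : (({c, d} : Finset E)ᶜ).card = (({a, b} : Finset E)ᶜ).card := by
    rw [Finset.card_compl, Finset.card_compl, hcc]
  set ρ : (Fin ((({a, b} : Finset E)ᶜ).card) ⊕ W) → E ⊕ W :=
    Sum.map (fun i => ((({a, b} : Finset E)ᶜ.orderIsoOfFin rfl) i : E)) id with hρ
  set γ : (Fin ((({a, b} : Finset E)ᶜ).card) ⊕ W) → E ⊕ W :=
    Sum.map (fun i => ((({c, d} : Finset E)ᶜ.orderIsoOfFin hcompl) i : E)) id with hγ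
  obtain ⟨hρinj, hρran⟩ := sum_map_orderIso_range (W := W) (({a, b} : Finset E)ᶜ) rfl
  obtain ⟨hγinj, hγran⟩ := sum_map_orderIso_range (W := W) (({c, d} : Finset E)ᶜ) hcompl
  have hconv : ∀ (x y : E) (p : E ⊕ W),
      (∀ e : E, p = Sum.inl e → e ∈ ({x, y} : Finset E)ᶜ) ↔ (p ≠ Sum.inl x ∧ p ≠ Sum.inl y) := by
    intro x y p
    match p with
    | Sum.inl e =>
      constructor
      · intro h
        have := h e rfl
        rw [Finset.mem_compl, Finset.mem_insert, Finset.mem_singleton] at this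
        push_neg at this
        exact ⟨fun hh => this.1 (Sum.inl.inj hh), fun hh => this.2 (Sum.inl.inj hh)⟩
      · rintro ⟨h1, h2⟩ e' he'
        rw [Finset.mem_compl, Finset.mem_insert, Finset.mem_singleton]
        push_neg
        have he : e = e' := Sum.inl.inj he'
        subst he
        exact ⟨fun hh => h1 (by rw [hh]), fun hh => h2 (by rw [hh])⟩
    | Sum.inr w =>
      constructor
      · intro _
        exact ⟨by simp, by simp⟩
      · intro _ e he
        simp at he
  obtain ⟨u, hu⟩ := canon_generic (G.bigMatK v0 ∅) (Sum.inl a) (Sum.inl b) (Sum.inl c)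
    (Sum.inl d) (by simpa using hab) (by simpa using hcd) ρ γ hρinj hγinj
    (fun p => (hρran p).trans (hconv a b p)) (fun p => (hγran p).trans (hconv c d p))
  have hd : G.dodgson v0 {a, b} {c, d} ∅ = ((G.bigMatK v0 ∅).submatrix ρ γ).det := by
    unfold Multigraph.dodgson
    rw [dif_pos hcc]
    rfl
  rcases Int.units_eq_one_or u with hu1 | hu1
  · refine ⟨1, Or.inl rfl, ?_⟩
    rw [one_smul, hd, hu, hu1]
    simp
  · refine ⟨-1, Or.inr rfl, ?_⟩
    rw [hd, hu, hu1]
    simp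

end PluckerGraphAux


/-- **Plücker identity for Dodgson polynomials.**  For any four distinct
edges `i, j, k, l` of a connected graph `G` there are consistent sign choices (the `ε`'s,
accounting for the sign ambiguity in the definition of Dodgson polynomials) with
`Ψ^{ij,kl}_G - Ψ^{ik,jl}_G + Ψ^{il,jk}_G = 0`. -/
theorem dodgson_plucker {E V : Type*} [Fintype E] [LinearOrder E] [Fintype V]
    [DecidableEq V] (G : Multigraph E V) (hconn : G.Connected) (v0 : V)
    (i j k l : E) (hij : i ≠ j) (hik : i ≠ k) (hil : i ≠ l) (hjk : j ≠ k) (hjl : j ≠ l)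
    (hkl : k ≠ l) :
    ∃ ε1 ε2 ε3 : ℚ, (ε1 = 1 ∨ ε1 = -1) ∧ (ε2 = 1 ∨ ε2 = -1) ∧ (ε3 = 1 ∨ ε3 = -1) ∧
      ε1 • G.dodgson v0 {i, j} {k, l} ∅ - ε2 • G.dodgson v0 {i, k} {j, l} ∅
        + ε3 • G.dodgson v0 {i, l} {j, k} ∅ = 0 := by
  classical
  set M := G.bigMatK v0 ∅ with hM
  set A := M.adjugate with hA
  have hdet : M.det ≠ 0 := det_bigMat_ne_zero G hconn v0
  have hcard : 2 ≤ Fintype.card (E ⊕ {v : V // v ≠ v0}) := by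
    have h1 : 1 < Fintype.card (E ⊕ {v : V // v ≠ v0}) :=
      Fintype.one_lt_card_iff_nontrivial.mpr ⟨⟨Sum.inl i, Sum.inl j, by simp [hij]⟩⟩
    omega
  have key : ∀ a b c d : E, a ≠ b →
      M.det * (((M.updateRow (Sum.inl a) (Pi.single (Sum.inl c) 1)).updateRow
          (Sum.inl b) (Pi.single (Sum.inl d) 1)).det)
        = A (Sum.inl c) (Sum.inl a) * A (Sum.inl d) (Sum.inl b)
          - A (Sum.inl c) (Sum.inl b) * A (Sum.inl d) (Sum.inl a) := by
    intro a b c d hab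
    have h := desnanot M (Sum.inl a) (Sum.inl b) (Sum.inl c) (Sum.inl d) (by simpa using hab)
    have hpow : Fintype.card (E ⊕ {v : V // v ≠ v0}) - 1
        = (Fintype.card (E ⊕ {v : V // v ≠ v0}) - 2) + 1 := by omega
    rw [hpow, pow_succ, mul_assoc] at h
    exact mul_left_cancel₀ (pow_ne_zero _ hdet) h
  have hS : ∀ x y : E, A (Sum.inl x) (Sum.inl y) = A (Sum.inl y) (Sum.inl x) :=
    fun x y => bigMat_adjugate_symm G v0 x y
  have e1 := key i j k l hij
  have e2 := key i k j l hik
  have e3 := key i l j k hil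
  have core : ((M.updateRow (Sum.inl i) (Pi.single (Sum.inl k) 1)).updateRow
        (Sum.inl j) (Pi.single (Sum.inl l) 1)).det
      - ((M.updateRow (Sum.inl i) (Pi.single (Sum.inl j) 1)).updateRow
        (Sum.inl k) (Pi.single (Sum.inl l) 1)).det
      + ((M.updateRow (Sum.inl i) (Pi.single (Sum.inl j) 1)).updateRow
        (Sum.inl l) (Pi.single (Sum.inl k) 1)).det = 0 := by
    apply mul_left_cancel₀ hdet
    rw [mul_zero]
    linear_combination e1 - e2 + e3 + A (Sum.inl k) (Sum.inl i) * hS l j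
      + A (Sum.inl l) (Sum.inl i) * hS j k + A (Sum.inl j) (Sum.inl i) * hS k l
  obtain ⟨s1, hs1, h1⟩ := canon_dodgson G v0 i j k l hij hkl hik hil hjk hjl
  obtain ⟨s2, hs2, h2⟩ := canon_dodgson G v0 i k j l hik hjl hij hil (Ne.symm hjk) hkl
  obtain ⟨s3, hs3, h3⟩ := canon_dodgson G v0 i l j k hil hjk hij hik (Ne.symm hjl) (Ne.symm hkl)
  refine ⟨s1, s2, s3, hs1, hs2, hs3, ?_⟩
  rw [h1, h2, h3]
  have hsq : ∀ (s : ℚ) (x : MvPolynomial E ℚ), (s = 1 ∨ s = -1) → s • s • x = x := by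
    rintro s x (rfl | rfl) <;> simp
  rw [hsq s1 _ hs1, hsq s2 _ hs2, hsq s3 _ hs3]
  exact core
end
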